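/- arXiv:2107.03693 — 5 statements merged into one kernel-verified Lean document; each statement's English description precedes it below -/
import Mathlib

section
/- Let H be a complex Hilbert space, ℳ ⊆ B(H) a von Neumann algebra, and (Σ, ℋ, ρ) a measure space. If F : Σ → ℳ is weak* measurable (i.e., σ ↦ ⟨F(σ)h, k⟩ is measurable for all h, k ∈ H) and the lower integral of σ ↦ ‖F(σ)‖ with respect to ρ is finite, then F is weak* integrable; moreover the weak* integral ∫_Σ F dρ lies in ℳ and satisfies the triangle inequality ‖∫_Σ F dρ‖ ≤ ⨍_Σ ‖F‖ dρ, where ⨍ denotes the lower integral. -/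
open MeasureTheory ENNReal
open scoped NNReal
open scoped InnerProductSpace

/-- The lower integral of a (possibly nonmeasurable) function `h : α → ℝ≥0∞`:
the supremum of integrals of measurable a.e. minorants. -/
noncomputable def lowerIntegral {α : Type*} [MeasurableSpace α] (ρ : Measure α)
    (h : α → ℝ≥0∞) : ℝ≥0∞ :=
  ⨆ (g : α → ℝ≥0∞) (_ : Measurable g) (_ : ∀ᵐ x ∂ρ, g x ≤ h x), ∫⁻ x, g x ∂ρ

/-- `I` is the weak* integral of `F` with respect to `ρ`: pairing against all pairs of
square-summable sequences of vectors (i.e. against elements of `H^∞`), the sum of the inner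
products of `I` equals the integral of the corresponding sums for `F`. -/
def IsWeakStarIntegral {H : Type*} [NormedAddCommGroup H] [InnerProductSpace ℂ H]
    [CompleteSpace H] {α : Type*} [MeasurableSpace α] (ρ : Measure α)
    (F : α → H →L[ℂ] H) (I : H →L[ℂ] H) : Prop :=
  ∀ h k : ℕ → H, Summable (fun n => ‖h n‖ ^ 2) → Summable (fun n => ‖k n‖ ^ 2) →
    ∑' n, ⟪I (h n), k n⟫_ℂ = ∫ σ, (∑' n, ⟪F σ (h n), k n⟫_ℂ) ∂ρ

section Aux

variable {H : Type*} [NormedAddCommGroup H] [InnerProductSpace ℂ H] [CompleteSpace H]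
  {α : Type*} [MeasurableSpace α]

omit [CompleteSpace H] in
/-- Key lemma: the lintegral of the matrix coefficient is bounded by the lower integral
of the operator norm. -/
lemma key_lintegral_bound (ρ : Measure α) (F : α → H →L[ℂ] H)
    (hmeas : ∀ h k : H, Measurable fun σ => ⟪F σ h, k⟫_ℂ) (h k : H) :
    ∫⁻ σ, ‖⟪F σ h, k⟫_ℂ‖₊ ∂ρ ≤
      lowerIntegral ρ (fun σ => (‖F σ‖₊ : ℝ≥0∞)) * ‖h‖₊ * ‖k‖₊ := by
  rcases eq_or_ne h 0 with rfl | hh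
  · simp
  rcases eq_or_ne k 0 with rfl | hk
  · simp
  set c : ℝ≥0∞ := (‖h‖₊ : ℝ≥0∞) * ‖k‖₊ with hc
  have hc0 : c ≠ 0 := by simp [hc, hh, hk]
  have hct : c ≠ ∞ := by finiteness
  set g : α → ℝ≥0∞ := fun σ => (‖⟪F σ h, k⟫_ℂ‖₊ : ℝ≥0∞) / c with hg
  have hgmeas : Measurable g := ((hmeas h k).nnnorm.coe_nnreal_ennreal).div_const c
  have hbd : ∀ σ, (‖⟪F σ h, k⟫_ℂ‖₊ : ℝ≥0∞) ≤ (‖F σ‖₊ : ℝ≥0∞) * c := by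
    intro σ
    have h1 : ‖⟪F σ h, k⟫_ℂ‖ ≤ ‖F σ‖ * (‖h‖ * ‖k‖) := by
      refine (norm_inner_le_norm _ _).trans ?_
      rw [← mul_assoc]
      exact mul_le_mul_of_nonneg_right ((F σ).le_opNorm h) (norm_nonneg k)
    have h2 : ‖⟪F σ h, k⟫_ℂ‖₊ ≤ ‖F σ‖₊ * (‖h‖₊ * ‖k‖₊) := by
      rw [← NNReal.coe_le_coe]; push_cast; exact h1
    calc (‖⟪F σ h, k⟫_ℂ‖₊ : ℝ≥0∞) ≤ ((‖F σ‖₊ * (‖h‖₊ * ‖k‖₊) : ℝ≥0) : ℝ≥0∞) :=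
          ENNReal.coe_le_coe.mpr h2
      _ = (‖F σ‖₊ : ℝ≥0∞) * c := by push_cast [hc]; ring
  have hgle : ∀ σ, g σ ≤ (‖F σ‖₊ : ℝ≥0∞) := fun σ =>
    ENNReal.div_le_of_le_mul (hbd σ)
  have hsup : ∫⁻ σ, g σ ∂ρ ≤ lowerIntegral ρ (fun σ => (‖F σ‖₊ : ℝ≥0∞)) :=
    le_iSup_of_le g (le_iSup_of_le hgmeas
      (le_iSup_of_le (Filter.Eventually.of_forall hgle) le_rfl))
  have heq : ∀ σ, (‖⟪F σ h, k⟫_ℂ‖₊ : ℝ≥0∞) = g σ * c := by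
    intro σ
    rw [hg]
    exact (ENNReal.div_mul_cancel hc0 hct).symm
  calc ∫⁻ σ, ‖⟪F σ h, k⟫_ℂ‖₊ ∂ρ = ∫⁻ σ, g σ * c ∂ρ := by simp_rw [heq]
    _ = (∫⁻ σ, g σ ∂ρ) * c := lintegral_mul_const c hgmeas
    _ ≤ lowerIntegral ρ (fun σ => (‖F σ‖₊ : ℝ≥0∞)) * c :=
        mul_le_mul_left hsup c
    _ = _ := by rw [hc, mul_assoc]

/-- Construction of the weak* integral from a uniform lintegral bound. -/
lemma aux_exists (M : VonNeumannAlgebra H) (μ : Measure α) (F : α → H →L[ℂ] H)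
    (hFM : ∀ σ, F σ ∈ M) (hmeas : ∀ h k : H, Measurable fun σ => ⟪F σ h, k⟫_ℂ)
    (Λ : ℝ≥0)
    (hbound : ∀ h k : H, ∫⁻ σ, ‖⟪F σ h, k⟫_ℂ‖₊ ∂μ ≤ (Λ : ℝ≥0∞) * ‖h‖₊ * ‖k‖₊) :
    ∃ I : H →L[ℂ] H, I ∈ M ∧ IsWeakStarIntegral μ F I ∧ ‖I‖ ≤ Λ := by
  have hint : ∀ h k : H, Integrable (fun σ => ⟪F σ h, k⟫_ℂ) μ := by
    intro h k
    refine ⟨(hmeas h k).aestronglyMeasurable, ?_⟩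
    exact (hbound h k).trans_lt (by finiteness)
  have hnorm : ∀ h k : H, ‖∫ σ, ⟪F σ h, k⟫_ℂ ∂μ‖ ≤ (Λ : ℝ) * ‖h‖ * ‖k‖ := by
    intro h k
    have h1 : (‖∫ σ, ⟪F σ h, k⟫_ℂ ∂μ‖₊ : ℝ≥0∞) ≤ (Λ : ℝ≥0∞) * ‖h‖₊ * ‖k‖₊ :=
      (enorm_integral_le_lintegral_enorm _).trans (hbound h k)
    rw [← ENNReal.coe_mul, ← ENNReal.coe_mul, ENNReal.coe_le_coe,
      ← NNReal.coe_le_coe] at h1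
    push_cast at h1
    exact h1
  -- the Riesz functional for fixed h
  let φ : H → (H →L[ℂ] ℂ) := fun h =>
    LinearMap.mkContinuous
      { toFun := fun k => ∫ σ, ⟪F σ h, k⟫_ℂ ∂μ
        map_add' := by
          intro k₁ k₂
          simp only [inner_add_right]
          exact integral_add (hint h k₁) (hint h k₂)
        map_smul' := by
          intro c k
          simp only [inner_smul_right, RingHom.id_apply, ← smul_eq_mul]
          exact integral_smul c _ }
      ((Λ : ℝ) * ‖h‖)
      (by
        intro k
        simpa [mul_assoc] using hnorm h k)
  have hφ : ∀ h k, φ h k = ∫ σ, ⟪F σ h, k⟫_ℂ ∂μ := fun h k => rfl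
  have hφnorm : ∀ h, ‖φ h‖ ≤ (Λ : ℝ) * ‖h‖ := by
    intro h
    exact LinearMap.mkContinuous_norm_le _ (by positivity) _
  let I0 : H → H := fun h => (InnerProductSpace.toDual ℂ H).symm (φ h)
  have hI0 : ∀ h k, ⟪I0 h, k⟫_ℂ = ∫ σ, ⟪F σ h, k⟫_ℂ ∂μ := by
    intro h k
    simp only [I0, InnerProductSpace.toDual_symm_apply, hφ]
  have hI0norm : ∀ h, ‖I0 h‖ ≤ (Λ : ℝ) * ‖h‖ := by
    intro h
    simpa [I0] using hφnorm h
  let I : H →L[ℂ] H :=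
    LinearMap.mkContinuous
      { toFun := I0
        map_add' := by
          intro a b
          refine ext_inner_right ℂ fun k => ?_
          rw [inner_add_left, hI0, hI0, hI0, ← integral_add (hint a k) (hint b k)]
          simp [inner_add_left]
        map_smul' := by
          intro c a
          refine ext_inner_right ℂ fun k => ?_
          rw [RingHom.id_apply, inner_smul_left, hI0, hI0, ← smul_eq_mul,
            ← integral_smul]
          simp [inner_smul_left, smul_eq_mul]
          exact integral_congr_ae (Filter.Eventually.of_forall fun σ => mul_comm _ _) }
      (Λ : ℝ) hI0norm
  have hI : ∀ h k, ⟪I h, k⟫_ℂ = ∫ σ, ⟪F σ h, k⟫_ℂ ∂μ := hI0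
  refine ⟨I, ?_, ?_, LinearMap.mkContinuous_norm_le _ Λ.coe_nonneg _⟩
  · -- membership in the von Neumann algebra, via the double commutant
    rw [← SetLike.mem_coe, ← M.centralizer_centralizer]
    refine Set.mem_centralizer_iff.mpr fun T hT => ?_
    ext x
    refine ext_inner_right ℂ fun k => ?_
    have hTF : ∀ σ, T ((F σ) x) = (F σ) (T x) := by
      intro σ
      have := Set.mem_centralizer_iff.mp hT (F σ) (hFM σ)
      calc T ((F σ) x) = (T * F σ) x := rfl
        _ = (F σ * T) x := by rw [this]
        _ = (F σ) (T x) := rfl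
    calc ⟪(T * I) x, k⟫_ℂ = ⟪I x, ContinuousLinearMap.adjoint T k⟫_ℂ :=
          (ContinuousLinearMap.adjoint_inner_right T (I x) k).symm
      _ = ∫ σ, ⟪F σ x, ContinuousLinearMap.adjoint T k⟫_ℂ ∂μ := hI x _
      _ = ∫ σ, ⟪F σ (T x), k⟫_ℂ ∂μ := by
          congr 1
          funext σ
          rw [ContinuousLinearMap.adjoint_inner_right, hTF σ]
      _ = ⟪I (T x), k⟫_ℂ := (hI _ _).symm
      _ = ⟪(I * T) x, k⟫_ℂ := rfl
  · -- the weak* integral property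
    intro h k hh hk
    have hsum : Summable (fun n => ‖h n‖ * ‖k n‖) := by
      refine Summable.of_nonneg_of_le (fun n => by positivity) (fun n => ?_)
        ((hh.add hk).div_const 2)
      nlinarith [sq_nonneg (‖h n‖ - ‖k n‖)]
    have hsumnn : Summable (fun n => (Λ * (‖h n‖₊ * ‖k n‖₊) : ℝ≥0)) := by
      rw [← NNReal.summable_coe]
      push_cast
      exact hsum.mul_left _
    have hne : ∑' n, ∫⁻ σ, ‖⟪F σ (h n), k n⟫_ℂ‖₊ ∂μ ≠ ∞ := by
      refine ne_top_of_le_ne_top ?_ (ENNReal.tsum_le_tsum fun n => hbound (h n) (k n))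
      have : ∀ n, (Λ : ℝ≥0∞) * ‖h n‖₊ * ‖k n‖₊ =
          ((Λ * (‖h n‖₊ * ‖k n‖₊) : ℝ≥0) : ℝ≥0∞) := by
        intro n; push_cast; ring
      simp_rw [this]
      exact ENNReal.tsum_coe_ne_top_iff_summable.mpr hsumnn
    calc ∑' n, ⟪I (h n), k n⟫_ℂ = ∑' n, ∫ σ, ⟪F σ (h n), k n⟫_ℂ ∂μ := by
          exact tsum_congr fun n => hI (h n) (k n)
      _ = ∫ σ, (∑' n, ⟪F σ (h n), k n⟫_ℂ) ∂μ :=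
          (integral_tsum (fun n => (hmeas (h n) (k n)).aestronglyMeasurable) hne).symm

end Aux

/-- **Existence of weak* integrals.** If `F : Σ → ℳ` is weak* measurable with finite lower
integral of its operator norm, then `F` is weak* integrable (over every measurable set), and
the weak* integral lies in `ℳ` and satisfies the operator norm integral triangle inequality. -/
theorem stmt1 {H : Type*} [NormedAddCommGroup H] [InnerProductSpace ℂ H] [CompleteSpace H]
    (M : VonNeumannAlgebra H) {α : Type*} [MeasurableSpace α] (ρ : Measure α)
    (F : α → H →L[ℂ] H) (hFM : ∀ σ, F σ ∈ M)
    (hmeas : ∀ h k : H, Measurable fun σ => ⟪F σ h, k⟫_ℂ)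
    (hfin : lowerIntegral ρ (fun σ => (‖F σ‖₊ : ℝ≥0∞)) < ∞) :
    (∀ S : Set α, MeasurableSet S →
      ∃ I : H →L[ℂ] H, I ∈ M ∧ IsWeakStarIntegral (ρ.restrict S) F I) ∧
    ∃ I : H →L[ℂ] H, I ∈ M ∧ IsWeakStarIntegral ρ F I ∧
      (‖I‖₊ : ℝ≥0∞) ≤ lowerIntegral ρ (fun σ => (‖F σ‖₊ : ℝ≥0∞)) := by
  set Lo := lowerIntegral ρ (fun σ => (‖F σ‖₊ : ℝ≥0∞)) with hLo
  set Λ := Lo.toNNReal with hΛdef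
  have hΛ : (Λ : ℝ≥0∞) = Lo := ENNReal.coe_toNNReal hfin.ne
  have hb : ∀ h k : H, ∫⁻ σ, ‖⟪F σ h, k⟫_ℂ‖₊ ∂ρ ≤ (Λ : ℝ≥0∞) * ‖h‖₊ * ‖k‖₊ := by
    intro h k
    rw [hΛ]
    exact key_lintegral_bound ρ F hmeas h k
  constructor
  · intro S _
    have hb' : ∀ h k : H,
        ∫⁻ σ, ‖⟪F σ h, k⟫_ℂ‖₊ ∂(ρ.restrict S) ≤ (Λ : ℝ≥0∞) * ‖h‖₊ * ‖k‖₊ := by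
      intro h k
      exact (lintegral_mono' Measure.restrict_le_self le_rfl).trans (hb h k)
    obtain ⟨I, h1, h2, _⟩ := aux_exists M (ρ.restrict S) F hFM hmeas Λ hb'
    exact ⟨I, h1, h2⟩
  · obtain ⟨I, h1, h2, h3⟩ := aux_exists M ρ F hFM hmeas Λ hb
    refine ⟨I, h1, h2, ?_⟩
    rw [← hΛ]
    exact ENNReal.coe_le_coe.mpr (by exact_mod_cast h3)
end

section
/- Let H be a complex Hilbert space, ℳ ⊆ B(H) a von Neumann algebra, (Σ, ℋ, ρ) a measure space, and (Fₙ) a sequence of weak* integrable maps Σ → ℳ such that Fₙ → F pointwise in the strong operator topology, where F : Σ → ℳ. If the upper integral of σ ↦ sup_n ‖Fₙ(σ)‖ with respect to ρ is finite, then F is weak* integrable and ∫_Σ Fₙ dρ → ∫_Σ F dρ in the strong operator topology. -/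
open MeasureTheory ENNReal Filter
open scoped InnerProductSpace

/-- The upper integral of a (possibly nonmeasurable) function `h : α → ℝ≥0∞`:
the infimum of integrals of measurable a.e. majorants. -/
noncomputable def upperIntegral {α : Type*} [MeasurableSpace α] (ρ : Measure α)
    (h : α → ℝ≥0∞) : ℝ≥0∞ :=
  ⨅ (g : α → ℝ≥0∞) (_ : Measurable g) (_ : ∀ᵐ x ∂ρ, h x ≤ g x), ∫⁻ x, g x ∂ρ

section Aux

variable {H : Type*} [NormedAddCommGroup H] [InnerProductSpace ℂ H] [CompleteSpace H]
  {α : Type*} [MeasurableSpace α]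

/-- Integrability of the matrix coefficients given an integrable dominating function. -/
lemma aux_integrable_inner (μ : Measure α) (F : α → H →L[ℂ] H) (G : α → ℝ)
    (hFmeas : ∀ x y : H, Measurable fun σ => ⟪F σ x, y⟫_ℂ)
    (hG : Integrable G μ) (hbd : ∀ᵐ σ ∂μ, ‖F σ‖ ≤ G σ) (x y : H) :
    Integrable (fun σ => ⟪F σ x, y⟫_ℂ) μ := by
  refine Integrable.mono' (hG.mul_const (‖x‖ * ‖y‖)) ((hFmeas x y).aestronglyMeasurable) ?_
  filter_upwards [hbd] with σ hσ
  calc ‖⟪F σ x, y⟫_ℂ‖ ≤ ‖F σ x‖ * ‖y‖ := norm_inner_le_norm _ _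
    _ ≤ (‖F σ‖ * ‖x‖) * ‖y‖ := by
        gcongr; exact (F σ).le_opNorm x
    _ ≤ (G σ * ‖x‖) * ‖y‖ := by gcongr
    _ = G σ * (‖x‖ * ‖y‖) := by ring

/-- Existence of the weak*-integral operator, from a Riesz-representation argument. -/
lemma aux_exists_op (μ : Measure α) (F : α → H →L[ℂ] H) (G : α → ℝ)
    (hFmeas : ∀ x y : H, Measurable fun σ => ⟪F σ x, y⟫_ℂ)
    (hG : Integrable G μ) (hbd : ∀ᵐ σ ∂μ, ‖F σ‖ ≤ G σ) :
    ∃ I : H →L[ℂ] H, ∀ x y : H, ⟪I x, y⟫_ℂ = ∫ σ, ⟪F σ x, y⟫_ℂ ∂μ := by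
  have hInt := aux_integrable_inner μ F G hFmeas hG hbd
  have hGnn : 0 ≤ᵐ[μ] G := by
    filter_upwards [hbd] with σ hσ; exact le_trans (norm_nonneg _) hσ
  have hCnn : 0 ≤ ∫ σ, G σ ∂μ := integral_nonneg_of_ae hGnn
  have keybd : ∀ x y : H, ‖∫ σ, ⟪F σ x, y⟫_ℂ ∂μ‖ ≤ (∫ σ, G σ ∂μ) * ‖x‖ * ‖y‖ := by
    intro x y
    calc ‖∫ σ, ⟪F σ x, y⟫_ℂ ∂μ‖ ≤ ∫ σ, ‖⟪F σ x, y⟫_ℂ‖ ∂μ := norm_integral_le_integral_norm _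
      _ ≤ ∫ σ, G σ * (‖x‖ * ‖y‖) ∂μ := by
          refine integral_mono_ae (hInt x y).norm (hG.mul_const _) ?_
          filter_upwards [hbd] with σ hσ
          calc ‖⟪F σ x, y⟫_ℂ‖ ≤ ‖F σ x‖ * ‖y‖ := norm_inner_le_norm _ _
            _ ≤ (‖F σ‖ * ‖x‖) * ‖y‖ := by gcongr; exact (F σ).le_opNorm x
            _ ≤ G σ * ‖x‖ * ‖y‖ := by gcongr
            _ = G σ * (‖x‖ * ‖y‖) := by ring
      _ = (∫ σ, G σ ∂μ) * ‖x‖ * ‖y‖ := by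
          rw [MeasureTheory.integral_mul_const]; ring
  -- the functional k ↦ ∫ ⟪F σ x, k⟫, for each x
  have φdef : ∀ x : H, ∃ w : H, ∀ y : H, ⟪w, y⟫_ℂ = ∫ σ, ⟪F σ x, y⟫_ℂ ∂μ := by
    intro x
    let ψlin : H →ₗ[ℂ] ℂ :=
      { toFun := fun y => ∫ σ, ⟪F σ x, y⟫_ℂ ∂μ
        map_add' := by
          intro y z
          simp only [inner_add_right]
          exact integral_add (hInt x y) (hInt x z)
        map_smul' := by
          intro c y
          simp only [inner_smul_right, RingHom.id_apply]
          exact integral_smul c _ }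
    let ψ : H →L[ℂ] ℂ := LinearMap.mkContinuous ψlin ((∫ σ, G σ ∂μ) * ‖x‖)
      (fun y => by simpa [ψlin, mul_assoc] using keybd x y)
    refine ⟨(InnerProductSpace.toDual ℂ H).symm ψ, fun y => ?_⟩
    simpa [ψ, ψlin] using (InnerProductSpace.toDual_symm_apply (𝕜 := ℂ) (E := H) (y := ψ) (x := y))
  choose φ hφ using φdef
  have hadd : ∀ x z : H, φ (x + z) = φ x + φ z := by
    intro x z
    refine ext_inner_right ℂ fun v => ?_
    rw [inner_add_left, hφ, hφ, hφ, ← integral_add (hInt x v) (hInt z v)]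
    simp [inner_add_left]
  have hsmul : ∀ (c : ℂ) (x : H), φ (c • x) = c • φ x
    := by
    intro c x
    refine ext_inner_right ℂ fun v => ?_
    rw [inner_smul_left, hφ, hφ]
    rw [← MeasureTheory.integral_const_mul]
    congr 1; funext σ; simp [inner_smul_left, mul_comm]
  have hnorm : ∀ x : H, ‖φ x‖ ≤ (∫ σ, G σ ∂μ) * ‖x‖ := by
    intro x
    have h1 : ⟪φ x, φ x⟫_ℂ = ∫ σ, ⟪F σ x, φ x⟫_ℂ ∂μ := hφ x (φ x)
    have h2 : (‖φ x‖ : ℝ) ^ 2 = ‖⟪φ x, φ x⟫_ℂ‖ := by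
      rw [inner_self_eq_norm_sq_to_K]
      simp [norm_pow]
    have h3 : (‖φ x‖ : ℝ) ^ 2 ≤ (∫ σ, G σ ∂μ) * ‖x‖ * ‖φ x‖ := by
      rw [h2, h1]; exact keybd x (φ x)
    have hCnn' : 0 ≤ (∫ σ, G σ ∂μ) * ‖x‖ := mul_nonneg hCnn (norm_nonneg x)
    nlinarith [norm_nonneg (φ x)]
  refine ⟨LinearMap.mkContinuous
    { toFun := φ, map_add' := hadd, map_smul' := hsmul } (∫ σ, G σ ∂μ)
    (fun x => by simpa [mul_comm] using hnorm x), fun x y => ?_⟩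
  exact hφ x y

/-- Such an operator belongs to the von Neumann algebra. -/
lemma aux_mem (M : VonNeumannAlgebra H) (μ : Measure α) (F : α → H →L[ℂ] H)
    (I : H →L[ℂ] H) (hF : ∀ σ, F σ ∈ M)
    (hI : ∀ x y : H, ⟪I x, y⟫_ℂ = ∫ σ, ⟪F σ x, y⟫_ℂ ∂μ) : I ∈ M := by
  have hmm : I ∈ Set.centralizer (Set.centralizer (M : Set (H →L[ℂ] H))) := by
    intro T hT
    ext x
    refine ext_inner_right ℂ fun y => ?_
    have hc : ∀ σ, F σ * T = T * F σ := fun σ => hT (F σ) (hF σ)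
    calc ⟪(T * I) x, y⟫_ℂ = ⟪I x, ContinuousLinearMap.adjoint T y⟫_ℂ := by
          simp [ContinuousLinearMap.mul_apply,
            ContinuousLinearMap.adjoint_inner_right]
      _ = ∫ σ, ⟪F σ x, ContinuousLinearMap.adjoint T y⟫_ℂ ∂μ := hI _ _
      _ = ∫ σ, ⟪F σ (T x), y⟫_ℂ ∂μ := by
          congr 1; funext σ
          rw [ContinuousLinearMap.adjoint_inner_right]
          have := congrArg (fun A : H →L[ℂ] H => A x) (hc σ)
          simp only [ContinuousLinearMap.mul_apply] at this
          rw [← this]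
      _ = ⟪I (T x), y⟫_ℂ := (hI _ _).symm
      _ = ⟪(I * T) x, y⟫_ℂ := by simp [ContinuousLinearMap.mul_apply]
  rw [M.centralizer_centralizer] at hmm
  exact hmm

lemma aux_summable_mul {h k : ℕ → H} (hh : Summable fun n => ‖h n‖ ^ 2)
    (hk : Summable fun n => ‖k n‖ ^ 2) : Summable fun n => ‖h n‖ * ‖k n‖ := by
  refine Summable.of_nonneg_of_le (fun n => mul_nonneg (norm_nonneg _) (norm_nonneg _))
    (fun n => ?_) ((hh.add hk).mul_right (1/2 : ℝ))
  have := sq_nonneg (‖h n‖ - ‖k n‖)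
  nlinarith

/-- From the single-vector characterization to the ℓ²-pairing characterization. -/
lemma aux_isWeakStar (μ : Measure α) (F : α → H →L[ℂ] H) (G : α → ℝ) (I : H →L[ℂ] H)
    (hFmeas : ∀ x y : H, Measurable fun σ => ⟪F σ x, y⟫_ℂ)
    (hG : Integrable G μ) (hbd : ∀ᵐ σ ∂μ, ‖F σ‖ ≤ G σ)
    (hI : ∀ x y : H, ⟪I x, y⟫_ℂ = ∫ σ, ⟪F σ x, y⟫_ℂ ∂μ) :
    IsWeakStarIntegral μ F I := by
  intro h k hh hk
  have hGnn : 0 ≤ᵐ[μ] G := by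
    filter_upwards [hbd] with σ hσ; exact le_trans (norm_nonneg _) hσ
  have hsum := aux_summable_mul hh hk
  have hfin : ∑' n, ∫⁻ σ, ‖⟪F σ (h n), k n⟫_ℂ‖₊ ∂μ ≠ ∞ := by
    have hGlint : ∫⁻ σ, ENNReal.ofReal (G σ) ∂μ = ENNReal.ofReal (∫ σ, G σ ∂μ) :=
      (ofReal_integral_eq_lintegral_ofReal hG hGnn).symm
    have hbd1 : ∀ n, ∫⁻ σ, ‖⟪F σ (h n), k n⟫_ℂ‖₊ ∂μ ≤
        ENNReal.ofReal (‖h n‖ * ‖k n‖) * ENNReal.ofReal (∫ σ, G σ ∂μ) := by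
      intro n
      rw [← hGlint, ← lintegral_const_mul' _ _ ENNReal.ofReal_ne_top]
      refine lintegral_mono_ae ?_
      filter_upwards [hbd] with σ hσ
      have hnn : (0:ℝ) ≤ G σ := le_trans (norm_nonneg _) hσ
      rw [← ENNReal.ofReal_mul (by positivity), ← enorm_eq_nnnorm, ← ofReal_norm]
      apply ENNReal.ofReal_le_ofReal
      calc ‖⟪F σ (h n), k n⟫_ℂ‖ ≤ ‖F σ (h n)‖ * ‖k n‖ := norm_inner_le_norm _ _
        _ ≤ (‖F σ‖ * ‖h n‖) * ‖k n‖ := by gcongr; exact (F σ).le_opNorm _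
        _ ≤ (G σ * ‖h n‖) * ‖k n‖ := by gcongr
        _ = ‖h n‖ * ‖k n‖ * G σ := by ring
    refine ne_top_of_le_ne_top ?_ (ENNReal.tsum_le_tsum hbd1)
    rw [ENNReal.tsum_mul_right,
      ← ENNReal.ofReal_tsum_of_nonneg (fun n => mul_nonneg (norm_nonneg _) (norm_nonneg _)) hsum]
    exact ENNReal.mul_ne_top ENNReal.ofReal_ne_top ENNReal.ofReal_ne_top
  calc ∑' n, ⟪I (h n), k n⟫_ℂ = ∑' n, ∫ σ, ⟪F σ (h n), k n⟫_ℂ ∂μ := by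
        congr 1; funext n; exact hI _ _
    _ = ∫ σ, (∑' n, ⟪F σ (h n), k n⟫_ℂ) ∂μ :=
        (MeasureTheory.integral_tsum (fun n => (hFmeas (h n) (k n)).aestronglyMeasurable) hfin).symm

end Aux

/-- **Operator-valued dominated convergence theorem (SOT case).** If the weak* integrable
maps `Fₙ : Σ → ℳ` converge to `F : Σ → ℳ` pointwise in the strong operator topology and the
upper integral of `sup_n ‖Fₙ‖` is finite, then `F` is weak* integrable and
`∫ Fₙ dρ → ∫ F dρ` in the strong operator topology. -/
theorem stmt2 {H : Type*} [NormedAddCommGroup H] [InnerProductSpace ℂ H] [CompleteSpace H]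
    (M : VonNeumannAlgebra H) {α : Type*} [MeasurableSpace α] (ρ : Measure α)
    (Fn : ℕ → α → H →L[ℂ] H) (F : α → H →L[ℂ] H)
    (hFnM : ∀ n σ, Fn n σ ∈ M) (hFM : ∀ σ, F σ ∈ M)
    (hmeas : ∀ n, ∀ h k : H, Measurable fun σ => ⟪Fn n σ h, k⟫_ℂ)
    (hintegrable : ∀ n, ∀ S : Set α, MeasurableSet S →
      ∃ I : H →L[ℂ] H, I ∈ M ∧ IsWeakStarIntegral (ρ.restrict S) (Fn n) I)
    (hSOT : ∀ σ, ∀ x : H, Tendsto (fun n => Fn n σ x) atTop (nhds (F σ x)))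
    (hbound : upperIntegral ρ (fun σ => ⨆ n, (‖Fn n σ‖₊ : ℝ≥0∞)) < ∞) :
    (∀ S : Set α, MeasurableSet S →
      ∃ I : H →L[ℂ] H, I ∈ M ∧ IsWeakStarIntegral (ρ.restrict S) F I) ∧
    ∀ (I : H →L[ℂ] H) (J : ℕ → H →L[ℂ] H),
      IsWeakStarIntegral ρ F I → (∀ n, IsWeakStarIntegral ρ (Fn n) (J n)) →
      ∀ x : H, Tendsto (fun n => J n x) atTop (nhds (I x)) := by
  have hbound' : ∃ g : α → ℝ≥0∞, Measurable g ∧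
      (∀ᵐ σ ∂ρ, (⨆ n, (‖Fn n σ‖₊ : ℝ≥0∞)) ≤ g σ) ∧ ∫⁻ σ, g σ ∂ρ < ∞ := by
    simp only [upperIntegral, iInf_lt_iff] at hbound
    obtain ⟨g, hg1, hg2, hg3⟩ := hbound
    exact ⟨g, hg1, hg2, hg3⟩
  obtain ⟨g, hg_meas, hg_ae, hg_int⟩ := hbound'
  set G : α → ℝ := fun σ => (g σ).toReal with hGdef
  have hGint : Integrable G ρ := integrable_toReal_of_lintegral_ne_top hg_meas.aemeasurable hg_int.ne
  have hae : ∀ᵐ σ ∂ρ, (∀ n, ‖Fn n σ‖ ≤ G σ) ∧ ‖F σ‖ ≤ G σ := by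
    filter_upwards [hg_ae, ae_lt_top hg_meas hg_int.ne] with σ h1 h2
    have hn : ∀ n, ‖Fn n σ‖ ≤ G σ := by
      intro n
      have h3 : (‖Fn n σ‖₊ : ℝ≥0∞) ≤ g σ := le_trans (le_iSup (fun m => (‖Fn m σ‖₊ : ℝ≥0∞)) n) h1
      have := ENNReal.toReal_mono h2.ne h3
      simpa [hGdef] using this
    refine ⟨hn, ?_⟩
    refine (F σ).opNorm_le_bound ENNReal.toReal_nonneg fun x => ?_
    refine le_of_tendsto (hSOT σ x).norm (Eventually.of_forall fun n => ?_)
    calc ‖Fn n σ x‖ ≤ ‖Fn n σ‖ * ‖x‖ := (Fn n σ).le_opNorm x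
      _ ≤ G σ * ‖x‖ := by gcongr; exact hn n
  have haeF : ∀ᵐ σ ∂ρ, ‖F σ‖ ≤ G σ := hae.mono fun σ h => h.2
  have haeFn : ∀ n, ∀ᵐ σ ∂ρ, ‖Fn n σ‖ ≤ G σ := fun n => hae.mono fun σ h => h.1 n
  have hFmeas : ∀ x y : H, Measurable fun σ => ⟪F σ x, y⟫_ℂ := by
    intro x y
    refine measurable_of_tendsto_metrizable' atTop (fun n => hmeas n x y) ?_
    rw [tendsto_pi_nhds]
    intro σ
    exact Tendsto.inner (hSOT σ x) tendsto_const_nhds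
  constructor
  · intro S hS
    have hbdS : ∀ᵐ σ ∂ρ.restrict S, ‖F σ‖ ≤ G σ := ae_restrict_of_ae haeF
    have hGS : Integrable G (ρ.restrict S) := hGint.restrict
    obtain ⟨I, hI⟩ := aux_exists_op (ρ.restrict S) F G hFmeas hGS hbdS
    exact ⟨I, aux_mem M _ F I hFM hI, aux_isWeakStar _ F G I hFmeas hGS hbdS hI⟩
  · intro I J hI hJ x
    have single : ∀ (K : H →L[ℂ] H) (Φ : α → H →L[ℂ] H), IsWeakStarIntegral ρ Φ K →
        ∀ u v : H, ⟪K u, v⟫_ℂ = ∫ σ, ⟪Φ σ u, v⟫_ℂ ∂ρ := by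
      intro K Φ hK u v
      set e : ℕ → H := fun n => if n = 0 then u else 0 with he
      set w : ℕ → H := fun n => if n = 0 then v else 0 with hw
      have hs1 : Summable fun n => ‖e n‖ ^ 2 := by
        refine summable_of_ne_finset_zero (s := {0}) fun n hn => ?_
        simp at hn
        simp [he, hn]
      have hs2 : Summable fun n => ‖w n‖ ^ 2 := by
        refine summable_of_ne_finset_zero (s := {0}) fun n hn => ?_
        simp at hn
        simp [hw, hn]
      have hKe := hK e w hs1 hs2
      have h1 : ∑' n, ⟪K (e n), w n⟫_ℂ = ⟪K u, v⟫_ℂ := by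
        rw [tsum_eq_single 0 (fun n hn => by simp [hw, hn])]
        simp [he, hw]
      have h2 : ∀ σ, (∑' n, ⟪Φ σ (e n), w n⟫_ℂ) = ⟪Φ σ u, v⟫_ℂ := fun σ => by
        rw [tsum_eq_single 0 (fun n hn => by simp [hw, hn])]
        simp [he, hw]
      rw [← h1, hKe]
      congr 1; funext σ; exact h2 σ
    have hsv_F := single I F hI
    have hsv_Fn : ∀ n, ∀ u v : H, ⟪J n u, v⟫_ℂ = ∫ σ, ⟪Fn n σ u, v⟫_ℂ ∂ρ :=
      fun n => single (J n) (Fn n) (hJ n)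
    set C := ∫ σ, G σ ∂ρ with hC
    have hCnn : 0 ≤ C := integral_nonneg_of_ae (haeF.mono fun σ h => le_trans (norm_nonneg _) h)
    have hIntF : ∀ u v : H, Integrable (fun σ => ⟪F σ u, v⟫_ℂ) ρ :=
      aux_integrable_inner ρ F G hFmeas hGint haeF
    have hIntFn : ∀ n, ∀ u v : H, Integrable (fun σ => ⟪Fn n σ u, v⟫_ℂ) ρ :=
      fun n => aux_integrable_inner ρ (Fn n) G (hmeas n) hGint (haeFn n)
    have opbd : ∀ (K : H →L[ℂ] H) (Φ : α → H →L[ℂ] H),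
        (∀ u v : H, ⟪K u, v⟫_ℂ = ∫ σ, ⟪Φ σ u, v⟫_ℂ ∂ρ) →
        (∀ u v : H, Integrable (fun σ => ⟪Φ σ u, v⟫_ℂ) ρ) →
        (∀ᵐ σ ∂ρ, ‖Φ σ‖ ≤ G σ) → ∀ u : H, ‖K u‖ ≤ C * ‖u‖ := by
      intro K Φ hKf hKint hKbd u
      have h2 : (‖K u‖ : ℝ) ^ 2 = ‖⟪K u, K u⟫_ℂ‖ := by
        rw [inner_self_eq_norm_sq_to_K]; simp
      have h3 : (‖K u‖ : ℝ) ^ 2 ≤ C * ‖u‖ * ‖K u‖ := by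
        rw [h2, hKf u (K u)]
        calc ‖∫ σ, ⟪Φ σ u, K u⟫_ℂ ∂ρ‖ ≤ ∫ σ, ‖⟪Φ σ u, K u⟫_ℂ‖ ∂ρ :=
              norm_integral_le_integral_norm _
          _ ≤ ∫ σ, G σ * (‖u‖ * ‖K u‖) ∂ρ := by
              refine integral_mono_ae (hKint u (K u)).norm (hGint.mul_const _) ?_
              filter_upwards [hKbd] with σ hσ
              calc ‖⟪Φ σ u, K u⟫_ℂ‖ ≤ ‖Φ σ u‖ * ‖K u‖ := norm_inner_le_norm _ _
                _ ≤ (‖Φ σ‖ * ‖u‖) * ‖K u‖ := by gcongr; exact (Φ σ).le_opNorm u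
                _ ≤ (G σ * ‖u‖) * ‖K u‖ := by gcongr
                _ = G σ * (‖u‖ * ‖K u‖) := by ring
          _ = C * ‖u‖ * ‖K u‖ := by rw [MeasureTheory.integral_mul_const, hC]; ring
      nlinarith [norm_nonneg (K u), mul_nonneg hCnn (norm_nonneg u)]
    have hJbd : ∀ n, ‖J n x‖ ≤ C * ‖x‖ := fun n => opbd (J n) (Fn n) (hsv_Fn n) (hIntFn n) (haeFn n) x
    have hIbd : ‖I x‖ ≤ C * ‖x‖ := opbd I F hsv_F hIntF haeF x
    set y : ℕ → H := fun n => J n x - I x with hy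
    set D : ℝ := 2 * (C * ‖x‖) with hD
    have hybd : ∀ n, ‖y n‖ ≤ D := fun n => by
      calc ‖y n‖ ≤ ‖J n x‖ + ‖I x‖ := norm_sub_le _ _
        _ ≤ C * ‖x‖ + C * ‖x‖ := add_le_add (hJbd n) hIbd
        _ = D := by rw [hD]; ring
    have hDnn : 0 ≤ D := le_trans (norm_nonneg (y 0)) (hybd 0)
    set f : ℕ → α → ℂ := fun n σ => ⟪Fn n σ x - F σ x, y n⟫_ℂ with hf
    have hfmeas : ∀ n, AEStronglyMeasurable (f n) ρ := fun n => by
      have hfe : f n = fun σ => ⟪Fn n σ x, y n⟫_ℂ - ⟪F σ x, y n⟫_ℂ := by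
        funext σ; rw [hf]; exact inner_sub_left _ _ _
      rw [hfe]; exact ((hmeas n x (y n)).sub (hFmeas x (y n))).aestronglyMeasurable
    have hint_eq : ∀ n, ⟪y n, y n⟫_ℂ = ∫ σ, f n σ ∂ρ := by
      intro n
      have h4 : ⟪y n, y n⟫_ℂ = ⟪J n x, y n⟫_ℂ - ⟪I x, y n⟫_ℂ := inner_sub_left _ _ _
      rw [h4, hsv_Fn n x (y n), hsv_F x (y n),
        ← integral_sub (hIntFn n x (y n)) (hIntF x (y n))]
      congr 1; funext σ; rw [hf]; exact (inner_sub_left _ _ _).symm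
    have htend : Tendsto (fun n => ∫ σ, f n σ ∂ρ) atTop (nhds 0) := by
      have h5 := tendsto_integral_of_dominated_convergence (f := fun _ => (0 : ℂ))
        (fun σ => G σ * (2 * ‖x‖ * D)) hfmeas (hGint.mul_const _) ?_ ?_
      · simpa using h5
      · intro n
        filter_upwards [hae] with σ hσ
        have hGnn : 0 ≤ G σ := le_trans (norm_nonneg _) hσ.2
        calc ‖f n σ‖ ≤ ‖Fn n σ x - F σ x‖ * ‖y n‖ := norm_inner_le_norm _ _
          _ ≤ (G σ * ‖x‖ + G σ * ‖x‖) * D := by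
              have h1 : ‖Fn n σ x - F σ x‖ ≤ G σ * ‖x‖ + G σ * ‖x‖ := by
                refine le_trans (norm_sub_le _ _) (add_le_add ?_ ?_)
                · exact le_trans ((Fn n σ).le_opNorm x) (by gcongr; exact hσ.1 n)
                · exact le_trans ((F σ).le_opNorm x) (by gcongr; exact hσ.2)
              exact mul_le_mul h1 (hybd n) (norm_nonneg _) (by positivity)
          _ = G σ * (2 * ‖x‖ * D) := by ring
      · refine Eventually.of_forall fun σ => ?_
        have h0 : Tendsto (fun n => ‖Fn n σ x - F σ x‖ * D) atTop (nhds 0) := by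
          have h6 := (tendsto_iff_norm_sub_tendsto_zero.mp (hSOT σ x)).mul_const D
          simpa using h6
        refine squeeze_zero_norm (fun n => ?_) h0
        calc ‖f n σ‖ ≤ ‖Fn n σ x - F σ x‖ * ‖y n‖ := norm_inner_le_norm _ _
          _ ≤ ‖Fn n σ x - F σ x‖ * D := by gcongr; exact hybd n
    have hsq : Tendsto (fun n => (‖y n‖ : ℝ) ^ 2) atTop (nhds 0) := by
      have hnorm : ∀ n, (‖y n‖ : ℝ) ^ 2 = ‖∫ σ, f n σ ∂ρ‖ := fun n => by
        rw [← hint_eq n, inner_self_eq_norm_sq_to_K]; simp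
      have h7 : Tendsto (fun n => ‖∫ σ, f n σ ∂ρ‖) atTop (nhds 0) := by
        simpa using htend.norm
      exact h7.congr fun n => (hnorm n).symm
    have hyn : Tendsto (fun n => ‖y n‖) atTop (nhds 0) := by
      have h8 := (Real.continuous_sqrt.tendsto 0).comp hsq
      simp only [Function.comp_def, Real.sqrt_zero] at h8
      exact h8.congr fun n => Real.sqrt_sq (norm_nonneg _)
    rw [tendsto_iff_norm_sub_tendsto_zero]
    exact hyn
end

section
/- Let H be a complex Hilbert space, (Σ, ℋ, ρ) a measure space, and F : Σ → B(H) weak* measurable with F(σ) compact for every σ ∈ Σ and with finite lower integral of σ ↦ ‖F(σ)‖. Then the weak* integral ∫_Σ F dρ is a compact operator on H. -/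
open MeasureTheory ENNReal
open scoped InnerProductSpace

section Aux

open Filter Metric Set
open scoped Topology NNReal



/-- If an operator is not compact, there is `δ > 0` such that orthogonally to any
finite-dimensional subspace there is a unit vector whose image has norm `≥ δ`. -/
lemma exists_delta_of_not_compact {H : Type*} [NormedAddCommGroup H] [InnerProductSpace ℂ H]
    [CompleteSpace H] (I : H →L[ℂ] H) (hI : ¬ IsCompactOperator I) :
    ∃ δ : ℝ, 0 < δ ∧ ∀ E : Submodule ℂ H, FiniteDimensional ℂ E →
      ∃ e : H, ‖e‖ = 1 ∧ e ∈ Eᗮ ∧ δ ≤ ‖I e‖ := by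
  by_contra hcon
  push_neg at hcon
  apply hI
  have key := hcon
  -- build finite-rank approximations
  choose E hEfd hEsmall using fun n : ℕ => key (1 / (n + 1)) (by positivity)
  have hproj : ∀ n, IsCompactOperator
      ((E n).subtypeL ∘L (haveI := hEfd n; Submodule.orthogonalProjection (E n))) := by
    intro n
    haveI := hEfd n
    haveI : ProperSpace (E n) := FiniteDimensional.proper ℂ (E n)
    have hP : IsCompactOperator (Submodule.orthogonalProjection (E n) : H →L[ℂ] (E n)) := by
      rw [isCompactOperator_iff_exists_mem_nhds_image_subset_compact]
      refine ⟨closedBall 0 1, closedBall_mem_nhds 0 one_pos,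
        closedBall (0 : E n) 1, isCompact_closedBall _ _, ?_⟩
      rintro y ⟨x, hx, rfl⟩
      rw [mem_closedBall, dist_zero_right] at hx ⊢
      calc ‖Submodule.orthogonalProjection (E n) x‖ ≤ ‖(Submodule.orthogonalProjection (E n) : H →L[ℂ] E n)‖ * ‖x‖ :=
            (Submodule.orthogonalProjection (E n)).le_opNorm x
        _ ≤ 1 * 1 := by
            apply mul_le_mul (Submodule.orthogonalProjection_norm_le _) hx (norm_nonneg _)
            exact zero_le_one
        _ = 1 := one_mul 1
    have := hP.clm_comp (E n).subtypeL
    exact this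
  set u : ℕ → H →L[ℂ] H := fun n =>
    I ∘L ((E n).subtypeL ∘L (haveI := hEfd n; Submodule.orthogonalProjection (E n))) with hu
  have hucpt : ∀ n, IsCompactOperator (u n) := by
    intro n
    have := (hproj n).clm_comp I
    exact this
  have hnorm : ∀ n, ‖u n - I‖ ≤ 1 / (n + 1) := by
    intro n
    haveI := hEfd n
    apply ContinuousLinearMap.opNorm_le_bound _ (by positivity)
    intro x
    have hvmem : x - (Submodule.orthogonalProjection (E n) x : H) ∈ (E n)ᗮ :=
      (E n).sub_starProjection_mem_orthogonal x
    set v : H := x - (Submodule.orthogonalProjection (E n) x : H) with hv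
    have happ : (u n - I) x = - (I v) := by
      simp [hu, hv, map_sub]
    rw [happ, norm_neg]
    have hvle : ‖v‖ ≤ ‖x‖ := by
      have hinner : ⟪(Submodule.orthogonalProjection (E n) x : H), v⟫_ℂ = 0 :=
        hvmem _ (SetLike.coe_mem _)
      have hxeq : x = (Submodule.orthogonalProjection (E n) x : H) + v := by rw [hv]; abel
      have hsq := norm_add_sq_eq_norm_sq_add_norm_sq_of_inner_eq_zero _ _ hinner
      rw [← hxeq] at hsq
      nlinarith [norm_nonneg v, norm_nonneg x,
        norm_nonneg ((Submodule.orthogonalProjection (E n) x : H)), sq_nonneg ‖v‖]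
    rcases eq_or_ne v 0 with h0 | h0
    · rw [h0, map_zero, norm_zero]; positivity
    · have hnv : (0:ℝ) < ‖v‖ := norm_pos_iff.mpr h0
      set e : H := ‖v‖⁻¹ • v with he
      have he1 : ‖e‖ = 1 := by
        rw [he, norm_smul, norm_inv, norm_norm, inv_mul_cancel₀ hnv.ne']
      have heE : e ∈ (E n)ᗮ := Submodule.smul_mem _ _ hvmem
      have hIe : ‖I e‖ < 1 / (n + 1) := hEsmall n e he1 heE
      have hIv : ‖I v‖ = ‖v‖ * ‖I e‖ := by
        have hIe' : I e = ‖v‖⁻¹ • I v := by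
          rw [he]; exact I.map_smul_of_tower _ _
        rw [hIe', norm_smul, norm_inv, norm_norm]
        field_simp
      rw [hIv]
      calc ‖v‖ * ‖I e‖ ≤ ‖v‖ * (1 / (n + 1)) := by
            apply mul_le_mul_of_nonneg_left hIe.le hnv.le
        _ ≤ ‖x‖ * (1 / (n + 1)) := by
            apply mul_le_mul_of_nonneg_right hvle (by positivity)
        _ = 1 / (n + 1) * ‖x‖ := mul_comm _ _
  have htend : Tendsto u atTop (𝓝 I) := by
    rw [tendsto_iff_norm_sub_tendsto_zero]
    apply squeeze_zero (fun n => norm_nonneg _) hnorm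
    exact tendsto_one_div_add_atTop_nhds_zero_nat
  exact isCompactOperator_of_tendsto htend (Eventually.of_forall hucpt)



lemma exists_orthonormal_seq {H : Type*} [NormedAddCommGroup H] [InnerProductSpace ℂ H]
    (I : H →L[ℂ] H) (δ : ℝ)
    (h : ∀ E : Submodule ℂ H, FiniteDimensional ℂ E →
      ∃ e : H, ‖e‖ = 1 ∧ e ∈ Eᗮ ∧ δ ≤ ‖I e‖) :
    ∃ e : ℕ → H, Orthonormal ℂ e ∧ ∀ n, δ ≤ ‖I (e n)‖ := by
  have hfd : ∀ (n : ℕ) (v : Fin n → H),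
      FiniteDimensional ℂ (Submodule.span ℂ (Set.range v)) := fun n v =>
    FiniteDimensional.span_of_finite ℂ (Set.finite_range v)
  let pick : ∀ (n : ℕ) (v : Fin n → H), H := fun n v =>
    (h (Submodule.span ℂ (Set.range v)) (hfd n v)).choose
  have hpick : ∀ (n : ℕ) (v : Fin n → H), ‖pick n v‖ = 1 ∧
      pick n v ∈ (Submodule.span ℂ (Set.range v))ᗮ ∧ δ ≤ ‖I (pick n v)‖ := fun n v =>
    (h (Submodule.span ℂ (Set.range v)) (hfd n v)).choose_spec
  let Fn : (n : ℕ) → Fin n → H := fun n =>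
    Nat.rec (motive := fun k => Fin k → H) Fin.elim0
      (fun k ih => Fin.snoc ih (pick k ih)) n
  let e : ℕ → H := fun n => pick n (Fn n)
  have hstep : ∀ k, Fn (k + 1) = Fin.snoc (Fn k) (pick k (Fn k)) := fun k => rfl
  have hFe : ∀ n (i : Fin n), Fn n i = e i := by
    intro n
    induction n with
    | zero => exact fun i => i.elim0
    | succ k ih =>
      intro i
      rw [hstep k]
      refine Fin.lastCases ?_ ?_ i
      · rw [Fin.snoc_last, Fin.val_last]
      · intro j
        rw [Fin.snoc_castSucc, ih j]
  have horth : ∀ m n : ℕ, m < n → ⟪e m, e n⟫_ℂ = 0 := by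
    intro m n hmn
    have hmem : e m ∈ Submodule.span ℂ (Set.range (Fn n)) := by
      apply Submodule.subset_span
      exact ⟨⟨m, hmn⟩, hFe n ⟨m, hmn⟩⟩
    exact (Submodule.mem_orthogonal _ _).mp (hpick n (Fn n)).2.1 _ hmem
  refine ⟨e, ⟨fun n => (hpick n (Fn n)).1, ?_⟩, fun n => (hpick n (Fn n)).2.2⟩
  intro i j hij
  rcases lt_or_gt_of_ne hij with hlt | hgt
  · exact horth i j hlt
  · rw [← inner_conj_symm, horth j i hgt, map_zero]

lemma compact_tendsto_of_weak_null {H : Type*} [NormedAddCommGroup H] [InnerProductSpace ℂ H]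
    [CompleteSpace H] (K : H →L[ℂ] H) (hK : IsCompactOperator K)
    (e : ℕ → H) (hbdd : ∀ n, ‖e n‖ ≤ 1)
    (hw : ∀ y : H, Tendsto (fun n => ⟪e n, y⟫_ℂ) atTop (𝓝 0)) :
    Tendsto (fun n => K (e n)) atTop (𝓝 0) := by
  obtain ⟨C, hCcpt, hCsub⟩ :=
    hK.image_closedBall_subset_compact (𝕜₁ := ℂ) (f := (K : H →ₗ[ℂ] H)) 1
  have hmem : ∀ n, K (e n) ∈ C := fun n =>
    hCsub ⟨e n, by simpa [mem_closedBall, dist_zero_right] using hbdd n, rfl⟩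
  apply tendsto_of_subseq_tendsto
  intro ns hns
  obtain ⟨z, _, φ, hφ, hzt⟩ := hCcpt.tendsto_subseq (fun k => hmem (ns k))
  have hz : z = 0 := by
    have h1 : ∀ y : H, Tendsto (fun k => ⟪K (e (ns (φ k))), y⟫_ℂ) atTop (𝓝 0) := by
      intro y
      have : (fun n => ⟪K (e n), y⟫_ℂ) = fun n => ⟪e n, ContinuousLinearMap.adjoint K y⟫_ℂ := by
        funext n
        rw [ContinuousLinearMap.adjoint_inner_right]
      have h0 : Tendsto (fun n => ⟪K (e n), y⟫_ℂ) atTop (𝓝 0) := by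
        rw [this]; exact hw _
      exact h0.comp (hns.comp hφ.tendsto_atTop)
    have h2 : ∀ y : H, Tendsto (fun k => ⟪K (e (ns (φ k))), y⟫_ℂ) atTop (𝓝 ⟪z, y⟫_ℂ) :=
      fun y => hzt.inner tendsto_const_nhds
    have : ⟪z, z⟫_ℂ = 0 := tendsto_nhds_unique (h2 z) (h1 z)
    exact inner_self_eq_zero.mp this
  exact ⟨φ, by rw [← hz]; exact hzt⟩

end Aux

open Filter Metric Set in
open scoped Topology NNReal in
/-- If `F : Σ → B(H)` is weak* measurable, takes compact-operator values, and has finite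
lower integral of its operator norm, then the weak* integral `∫_Σ F dρ` (the operator `I`
with `⟪I h, k⟫ = ∫ ⟪F σ h, k⟫ dρ(σ)` for all `h, k`) is a compact operator. -/
theorem stmt4 {H : Type*} [NormedAddCommGroup H] [InnerProductSpace ℂ H] [CompleteSpace H]
    {α : Type*} [MeasurableSpace α] (ρ : Measure α) (F : α → H →L[ℂ] H)
    (hmeas : ∀ h k : H, Measurable fun σ => ⟪F σ h, k⟫_ℂ)
    (hcompact : ∀ σ, IsCompactOperator (F σ))
    (hfin : lowerIntegral ρ (fun σ => (‖F σ‖₊ : ℝ≥0∞)) < ∞) :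
    ∀ I : H →L[ℂ] H, (∀ h k : H, ⟪I h, k⟫_ℂ = ∫ σ, ⟪F σ h, k⟫_ℂ ∂ρ) →
      IsCompactOperator I := by
  rw [lowerIntegral] at hfin
  intro I hI
  by_contra hnc
  obtain ⟨δ, hδ, hδE⟩ := exists_delta_of_not_compact I hnc
  obtain ⟨e, heON, heI⟩ := exists_orthonormal_seq I δ hδE
  have he1 : ∀ n, ‖e n‖ = 1 := heON.1
  -- the sequence is weakly null
  have hw : ∀ y : H, Tendsto (fun n => ⟪e n, y⟫_ℂ) atTop (𝓝 0) := by
    intro y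
    have hsum : Summable fun n => ‖⟪e n, y⟫_ℂ‖ ^ 2 := heON.inner_products_summable y
    have h2 : Tendsto (fun n => ‖⟪e n, y⟫_ℂ‖ ^ 2) atTop (𝓝 0) := hsum.tendsto_atTop_zero
    have h1 : Tendsto (fun n => ‖⟪e n, y⟫_ℂ‖) atTop (𝓝 0) := by
      have := h2.sqrt
      simpa [Real.sqrt_sq (norm_nonneg _), Real.sqrt_zero] using this
    exact tendsto_zero_iff_norm_tendsto_zero.mpr h1
  -- I is nonzero
  have hI0 : (‖I‖₊ : ℝ≥0∞) ≠ 0 := by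
    simp only [ne_eq, ENNReal.coe_eq_zero, nnnorm_eq_zero]
    rintro rfl
    exact hnc (by simpa using (isCompactOperator_zero (M₁ := H) (M₂ := H)))
  -- the integrands
  set f : ℕ → α → ℂ := fun n σ => ⟪F σ (e n), I (e n)⟫_ℂ with hf
  have hfmeas : ∀ n, Measurable (f n) := fun n => hmeas (e n) (I (e n))
  have hfb : ∀ n σ, ‖f n σ‖ ≤ ‖F σ‖ * ‖I‖ := by
    intro n σ
    calc ‖f n σ‖ ≤ ‖F σ (e n)‖ * ‖I (e n)‖ := norm_inner_le_norm _ _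
      _ ≤ (‖F σ‖ * ‖e n‖) * (‖I‖ * ‖e n‖) := by
          apply mul_le_mul ((F σ).le_opNorm _) (I.le_opNorm _) (norm_nonneg _)
          positivity
      _ = ‖F σ‖ * ‖I‖ := by rw [he1 n]; ring
  -- pointwise convergence to 0
  have hlim : ∀ σ, Tendsto (fun n => f n σ) atTop (𝓝 0) := by
    intro σ
    have hKe : Tendsto (fun n => F σ (e n)) atTop (𝓝 0) :=
      compact_tendsto_of_weak_null (F σ) (hcompact σ) e (fun n => (he1 n).le) hw
    have hKn : Tendsto (fun n => ‖F σ (e n)‖ * ‖I‖) atTop (𝓝 0) := by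
      have := (hKe.norm).mul_const ‖I‖
      simpa using this
    apply squeeze_zero_norm _ hKn
    intro n
    calc ‖f n σ‖ ≤ ‖F σ (e n)‖ * ‖I (e n)‖ := norm_inner_le_norm _ _
      _ ≤ ‖F σ (e n)‖ * (‖I‖ * ‖e n‖) :=
          mul_le_mul_of_nonneg_left (I.le_opNorm _) (norm_nonneg _)
      _ = ‖F σ (e n)‖ * ‖I‖ := by rw [he1 n]; ring
  -- dominating function
  set g₀ : α → ℝ≥0∞ := fun σ => ⨆ n, (‖f n σ‖₊ : ℝ≥0∞) with hg₀
  have hg₀meas : Measurable g₀ := Measurable.iSup fun n => (hfmeas n).nnnorm.coe_nnreal_ennreal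
  have hg₀le : ∀ σ, g₀ σ ≤ (‖F σ‖₊ : ℝ≥0∞) * (‖I‖₊ : ℝ≥0∞) := by
    intro σ
    apply iSup_le
    intro n
    rw [← ENNReal.coe_mul, ENNReal.coe_le_coe, ← NNReal.coe_le_coe]
    push_cast
    exact hfb n σ
  have hg₀fin : ∀ σ, g₀ σ ≠ ∞ :=
    fun σ => ((hg₀le σ).trans_lt (by exact ENNReal.mul_lt_top coe_lt_top coe_lt_top)).ne
  set m : α → ℝ≥0∞ := fun σ => g₀ σ / (‖I‖₊ : ℝ≥0∞) with hm
  have hmmeas : Measurable m := hg₀meas.div_const _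
  have hmle : ∀ σ, m σ ≤ (‖F σ‖₊ : ℝ≥0∞) := by
    intro σ
    rw [hm]
    rw [ENNReal.div_le_iff hI0 coe_ne_top]
    exact hg₀le σ
  have hml : ∫⁻ σ, m σ ∂ρ ≤ ⨆ (g : α → ℝ≥0∞) (_ : Measurable g)
      (_ : ∀ᵐ x ∂ρ, g x ≤ (‖F x‖₊ : ℝ≥0∞)), ∫⁻ x, g x ∂ρ := by
    apply le_iSup_of_le m
    apply le_iSup_of_le hmmeas
    exact le_iSup_of_le (Filter.Eventually.of_forall hmle) le_rfl
  have hmfin : ∫⁻ σ, m σ ∂ρ < ∞ := lt_of_le_of_lt hml hfin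
  have hg₀int : ∫⁻ σ, g₀ σ ∂ρ < ∞ := by
    have hcancel : ∀ σ, g₀ σ = m σ * (‖I‖₊ : ℝ≥0∞) := by
      intro σ
      rw [hm, ENNReal.div_mul_cancel hI0 coe_ne_top]
    calc ∫⁻ σ, g₀ σ ∂ρ = ∫⁻ σ, m σ * (‖I‖₊ : ℝ≥0∞) ∂ρ := by
          simp_rw [hcancel]
      _ = (∫⁻ σ, m σ ∂ρ) * (‖I‖₊ : ℝ≥0∞) := lintegral_mul_const _ hmmeas
      _ < ∞ := ENNReal.mul_lt_top hmfin coe_lt_top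
  set g : α → ℝ := fun σ => (g₀ σ).toReal with hg
  have hgint : Integrable g ρ :=
    integrable_toReal_of_lintegral_ne_top hg₀meas.aemeasurable hg₀int.ne
  have hbound : ∀ n, ∀ᵐ σ ∂ρ, ‖f n σ‖ ≤ g σ := by
    intro n
    apply Filter.Eventually.of_forall
    intro σ
    have h1 : (‖f n σ‖₊ : ℝ≥0∞) ≤ g₀ σ := le_iSup (fun k => (‖f k σ‖₊ : ℝ≥0∞)) n
    have := ENNReal.toReal_mono (hg₀fin σ) h1
    simpa using this
  -- dominated convergence
  have hDCT : Tendsto (fun n => ∫ σ, f n σ ∂ρ) atTop (𝓝 (∫ σ, (0 : ℂ) ∂ρ)) :=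
    tendsto_integral_of_dominated_convergence g
      (fun n => (hfmeas n).aestronglyMeasurable) hgint hbound
      (Filter.Eventually.of_forall hlim)
  rw [integral_zero] at hDCT
  have hval : ∀ n, ∫ σ, f n σ ∂ρ = ⟪I (e n), I (e n)⟫_ℂ := fun n => (hI (e n) (I (e n))).symm
  have hnorm : Tendsto (fun n => ‖∫ σ, f n σ ∂ρ‖) atTop (𝓝 0) := by
    simpa using hDCT.norm
  have hlb : ∀ n, δ ^ 2 ≤ ‖∫ σ, f n σ ∂ρ‖ := by
    intro n
    rw [hval n]
    have h1 : ‖(⟪I (e n), I (e n)⟫_ℂ)‖ = ‖I (e n)‖ ^ 2 := by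
      rw [inner_self_eq_norm_sq_to_K]
      simp
    rw [h1]
    exact pow_le_pow_left₀ hδ.le (heI n) 2
  have : δ ^ 2 ≤ 0 := ge_of_tendsto' hnorm (fun n => (hlb n))
  nlinarith
end

section
/- Let f ∈ L¹(ℝ) be bounded with f̂ ∈ L¹(ℝ) and supp f̂ ⊆ [0, σ] for some σ > 0. Then for all λ₁, λ₂ ∈ ℝ, f^{[1]}(λ₁, λ₂) = (i/2π) ∫_{ℝ₊²} f̂(u + v) e^{iλ₁u} e^{iλ₂v} du dv. -/
open MeasureTheory

/-- The Fourier transform `f̂(ξ) = ∫ e^{−iξx} f(x) dx`. -/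
noncomputable def fhat (f : ℝ → ℂ) (ξ : ℝ) : ℂ :=
  ∫ x : ℝ, Complex.exp (-(Complex.I * ξ * x)) * f x

/-- The first divided difference of `f`, extended to the diagonal by `f'`. -/
noncomputable def dd1 (f : ℝ → ℂ) (x y : ℝ) : ℂ :=
  if x = y then deriv f x else (f x - f y) / ((x : ℂ) - (y : ℂ))

open FourierTransform Real Complex Set

lemma fhat_eq (f : ℝ → ℂ) (ξ : ℝ) : fhat f ξ = 𝓕 f (ξ / (2 * Real.pi)) := by
  rw [fhat, Real.fourier_real_eq_integral_exp_smul]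
  congr 1
  ext x
  rw [smul_eq_mul]
  congr 2
  have hπ : (2 * Real.pi : ℂ) ≠ 0 := by
    simp [Real.pi_ne_zero, Complex.ofReal_ne_zero]
  push_cast
  field_simp

lemma Ffun_eq (f : ℝ → ℂ) : 𝓕 f = fun w => fhat f (2 * Real.pi * w) := by
  ext w
  rw [fhat_eq]
  congr 1
  field_simp

lemma exp_norm_one (x ξ : ℝ) : ‖Complex.exp (Complex.I * x * ξ)‖ = 1 := by
  rw [Complex.norm_exp]
  simp [Complex.mul_re]

lemma int_mul_exp {f : ℝ → ℂ} (hfhat : Integrable (fhat f)) (x : ℝ) :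
    Integrable (fun ξ : ℝ => fhat f ξ * Complex.exp (Complex.I * x * ξ)) := by
  apply Integrable.mono' hfhat.norm
  · exact (hfhat.aestronglyMeasurable.mul
      ((Complex.continuous_exp.comp (by continuity)).aestronglyMeasurable))
  · filter_upwards with ξ
    rw [norm_mul, exp_norm_one]
    simp

lemma inversion {f : ℝ → ℂ} (hcont : Continuous f) (hf : Integrable f)
    (hfhat : Integrable (fhat f)) (x : ℝ) :
    (∫ ξ : ℝ, fhat f ξ * Complex.exp (Complex.I * x * ξ)) = (2 * Real.pi) * f x := by
  have h2π : (2 * Real.pi) ≠ 0 := by positivity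
  have hF : Integrable (𝓕 f) := by
    rw [Ffun_eq]
    exact hfhat.comp_mul_left' (by positivity)
  have hinv := hcont.fourierInv_fourier_eq hf hF
  have h1 : f x = 𝓕⁻ (𝓕 f) x := by rw [hinv]
  rw [Real.fourierInv_eq'] at h1
  have h2 : (∫ ξ : ℝ, fhat f ξ * Complex.exp (Complex.I * x * ξ))
      = (∫ w : ℝ, (fun ξ : ℝ => fhat f ξ * Complex.exp (Complex.I * x * ξ)) (2 * Real.pi * w)) * (2 * Real.pi) := by
    rw [MeasureTheory.Measure.integral_comp_mul_left
      (fun ξ : ℝ => fhat f ξ * Complex.exp (Complex.I * x * ξ)) (2 * Real.pi)]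
    rw [abs_of_pos (by positivity : (0:ℝ) < (2 * Real.pi)⁻¹)]
    rw [Complex.real_smul]
    push_cast
    have : (2 * (π:ℂ)) ≠ 0 := by
      simp [Real.pi_ne_zero, Complex.ofReal_ne_zero]
    field_simp
  rw [h2, h1]
  rw [mul_comm]
  congr 1
  rw [Ffun_eq]
  congr 1
  ext w
  simp only [smul_eq_mul]
  rw [mul_comm]
  congr 2
  have : (inner ℝ w x : ℝ) = w * x := Real.inner_apply w x
  rw [this]
  push_cast
  ring

lemma quarter (G : ℝ → ℂ) (hGc : Continuous G) (σ : ℝ) (M : ℝ)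
    (hGb : ∀ ξ, ‖G ξ‖ ≤ M) (hsupp : ∀ ξ, G ξ ≠ 0 → ξ ∈ Set.Icc 0 σ) (l₁ l₂ : ℝ) :
    (∫ w : ℝ × ℝ in Set.Ici (0:ℝ) ×ˢ Set.Ici (0:ℝ),
        G (w.1 + w.2) * Complex.exp (Complex.I * l₁ * w.1) * Complex.exp (Complex.I * l₂ * w.2))
    = ∫ ξ : ℝ, G ξ * Complex.exp (Complex.I * l₂ * ξ) *
        (∫ u in Set.Icc (0:ℝ) ξ, Complex.exp (Complex.I * (l₁ - l₂) * u)) := by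
  set Q : Set (ℝ × ℝ) := Set.Ici (0:ℝ) ×ˢ Set.Ici (0:ℝ) with hQ
  have hQm : MeasurableSet Q := measurableSet_Ici.prod measurableSet_Ici
  set φ : ℝ × ℝ → ℂ := fun w =>
    G (w.1 + w.2) * Complex.exp (Complex.I * l₁ * w.1) * Complex.exp (Complex.I * l₂ * w.2) with hφ
  set Φ : ℝ × ℝ → ℂ := Q.indicator φ with hΦ
  have hexpn : ∀ (l : ℝ) (x : ℝ), ‖Complex.exp (Complex.I * l * x)‖ = 1 := by
    intro l x
    rw [Complex.norm_exp]
    simp [Complex.mul_re]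
  have hφn : ∀ w : ℝ × ℝ, ‖φ w‖ = ‖G (w.1 + w.2)‖ := by
    intro w
    rw [hφ]
    simp only [norm_mul, hexpn]
    ring
  have hφc : Continuous φ := by
    refine ((hGc.comp (continuous_fst.add continuous_snd)).mul
      (Complex.continuous_exp.comp (by continuity))).mul
      (Complex.continuous_exp.comp (by continuity))
  have hbox : Integrable ((Set.Icc (0:ℝ) σ ×ˢ Set.Icc (0:ℝ) σ).indicator (fun _ => (|M| : ℝ))) := by
    rw [integrable_indicator_iff (measurableSet_Icc.prod measurableSet_Icc)]
    exact integrableOn_const ((isCompact_Icc.prod isCompact_Icc).measure_lt_top.ne)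
  have hΦint : Integrable Φ := by
    refine Integrable.mono' hbox (hφc.aestronglyMeasurable.indicator hQm) ?_
    filter_upwards with w
    by_cases hw : w ∈ Q
    · rw [hΦ, Set.indicator_of_mem hw]
      by_cases hG : G (w.1 + w.2) = 0
      · rw [hφn, hG, norm_zero]
        exact Set.indicator_nonneg (fun _ _ => abs_nonneg M) w
      · have hmem := hsupp _ hG
        have hw1 : 0 ≤ w.1 := hw.1
        have hw2 : 0 ≤ w.2 := hw.2
        have : w ∈ Set.Icc (0:ℝ) σ ×ˢ Set.Icc (0:ℝ) σ := by
          constructor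
          · exact ⟨hw1, by linarith [hmem.2]⟩
          · exact ⟨hw2, by linarith [hmem.2]⟩
        rw [Set.indicator_of_mem this, hφn]
        exact (hGb _).trans (le_abs_self M)
    · rw [hΦ, Set.indicator_of_notMem hw, norm_zero]
      exact Set.indicator_nonneg (fun _ _ => abs_nonneg M) w
  set Ψ : ℝ × ℝ → ℂ := fun z => Φ (z.1, z.2 - z.1) with hΨ
  have hcomp : (Ψ ∘ fun z : ℝ × ℝ => (z.1, z.1 + z.2)) = Φ := by
    funext z
    simp [hΨ]
  have mp : MeasurePreserving (fun z : ℝ × ℝ => (z.1, z.1 + z.2))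
      ((volume : Measure ℝ).prod volume) ((volume : Measure ℝ).prod volume) :=
    measurePreserving_prod_add volume volume
  have emb : MeasurableEmbedding (fun z : ℝ × ℝ => (z.1, z.1 + z.2)) :=
    (MeasurableEquiv.shearAddRight ℝ).measurableEmbedding
  have hvol : (volume : Measure (ℝ × ℝ)) = (volume : Measure ℝ).prod volume :=
    Measure.volume_eq_prod _ _
  have hΦint' : Integrable Φ ((volume : Measure ℝ).prod volume) := hvol ▸ hΦint
  have hΨint : Integrable Ψ ((volume : Measure ℝ).prod volume) :=
    (mp.integrable_comp_emb emb).1 (hcomp ▸ hΦint')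
  have step1 : (∫ w : ℝ × ℝ in Q, φ w) = ∫ z : ℝ × ℝ, Ψ z ∂((volume : Measure ℝ).prod volume) := by
    rw [← integral_indicator hQm, ← hΦ, ← hcomp, hvol]
    exact mp.integral_comp emb Ψ
  have step2 : (∫ z : ℝ × ℝ, Ψ z ∂((volume : Measure ℝ).prod volume))
      = ∫ ξ : ℝ, ∫ u : ℝ, Ψ (u, ξ) := by
    rw [integral_prod Ψ hΨint]
    have huncurry : Function.uncurry (fun u ξ : ℝ => Ψ (u, ξ)) = Ψ := by
      funext z
      rfl
    exact integral_integral_swap (huncurry ▸ hΨint)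
  have hinner : ∀ ξ : ℝ, (∫ u : ℝ, Ψ (u, ξ))
      = G ξ * Complex.exp (Complex.I * l₂ * ξ) *
        (∫ u in Set.Icc (0:ℝ) ξ, Complex.exp (Complex.I * (l₁ - l₂) * u)) := by
    intro ξ
    have hmem : ∀ u : ℝ, ((u, ξ - u) ∈ Q) ↔ u ∈ Set.Icc (0:ℝ) ξ := by
      intro u
      simp only [hQ, Set.mem_prod, Set.mem_Ici, Set.mem_Icc, sub_nonneg]
    have hfun : (fun u : ℝ => Ψ (u, ξ)) = (Set.Icc (0:ℝ) ξ).indicator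
        (fun u => G ξ * Complex.exp (Complex.I * l₂ * ξ) * Complex.exp (Complex.I * (l₁ - l₂) * u)) := by
      funext u
      by_cases h : u ∈ Set.Icc (0:ℝ) ξ
      · rw [Set.indicator_of_mem h, hΨ]
        simp only
        rw [hΦ, Set.indicator_of_mem ((hmem u).2 h), hφ]
        simp only [add_sub_cancel]
        simp only [mul_assoc, ← Complex.exp_add]
        congr 2
        push_cast
        ring
      · rw [Set.indicator_of_notMem h, hΨ]
        simp only
        rw [hΦ, Set.indicator_of_notMem (fun hc => h ((hmem u).1 hc))]
    rw [hfun, integral_indicator measurableSet_Icc, integral_const_mul]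
  rw [step1, step2]
  exact integral_congr_ae (Filter.Eventually.of_forall hinner)

/-- If `f ∈ L¹(ℝ)` is bounded (and continuous) with `f̂ ∈ L¹(ℝ)` and `supp f̂ ⊆ [0, σ]`, then
`f^{[1]}(λ₁, λ₂) = (i/2π) ∫_{ℝ₊²} f̂(u + v) e^{iλ₁u} e^{iλ₂v} du dv`. -/
theorem stmt17 (σ : ℝ) (hσ : 0 < σ) (f : ℝ → ℂ)
    (hcont : Continuous f) (hbdd : ∃ C : ℝ, ∀ x, ‖f x‖ ≤ C)
    (hf : Integrable f) (hfhat : Integrable (fhat f))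
    (hsupp : ∀ ξ : ℝ, fhat f ξ ≠ 0 → ξ ∈ Set.Icc (0 : ℝ) σ) :
    ∀ l₁ l₂ : ℝ,
      dd1 f l₁ l₂ = (Complex.I / (2 * Real.pi)) *
        ∫ w : ℝ × ℝ in Set.Ici (0:ℝ) ×ˢ Set.Ici (0:ℝ),
          fhat f (w.1 + w.2) * Complex.exp (Complex.I * l₁ * w.1) *
            Complex.exp (Complex.I * l₂ * w.2) := by
  intro l₁ l₂
  have hπc : (2 * (π:ℂ)) ≠ 0 := by simp [Real.pi_ne_zero, Complex.ofReal_ne_zero]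
  have hGc : Continuous (fhat f) := by
    have h : fhat f = fun ξ => 𝓕 f (ξ / (2 * π)) := funext (fhat_eq f)
    rw [h]
    exact (VectorFourier.fourierIntegral_continuous Real.continuous_fourierChar
      (by exact continuous_inner) hf).comp (continuous_id.div_const _)
  set M : ℝ := ∫ x : ℝ, ‖f x‖ with hM
  have hGb : ∀ ξ, ‖fhat f ξ‖ ≤ M := by
    intro ξ
    refine (norm_integral_le_integral_norm _).trans_eq ?_
    congr 1
    funext x
    rw [norm_mul]
    have h1 : ‖Complex.exp (-(Complex.I * ξ * x))‖ = 1 := by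
      rw [Complex.norm_exp]
      simp [Complex.mul_re]
    rw [h1, one_mul]
  rw [quarter (fhat f) hGc σ M hGb hsupp l₁ l₂]
  by_cases hl : l₁ = l₂
  · subst hl
    simp only [dd1, if_pos rfl, ↓reduceIte]
    -- pointwise simplification of the inner integral
    have hK : ∀ ξ : ℝ, fhat f ξ * Complex.exp (Complex.I * l₁ * ξ) *
        (∫ u in Set.Icc (0:ℝ) ξ, Complex.exp (Complex.I * ((l₁:ℂ) - (l₁:ℂ)) * u))
        = fhat f ξ * Complex.exp (Complex.I * l₁ * ξ) * (ξ:ℂ) := by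
      intro ξ
      by_cases hG : fhat f ξ = 0
      · simp [hG]
      · have hξ0 : (0:ℝ) ≤ ξ := (hsupp ξ hG).1
        congr 1
        simp only [sub_self, mul_zero, zero_mul, Complex.exp_zero]
        rw [setIntegral_const, Real.volume_real_Icc_of_le hξ0, sub_zero,
          Complex.real_smul, mul_one]
    rw [integral_congr_ae (Filter.Eventually.of_forall hK)]
    -- derivative under the integral
    set F' : ℝ → ℝ → ℂ := fun x ξ =>
      fhat f ξ * (Complex.exp (Complex.I * x * ξ) * (Complex.I * ξ)) with hF'
    have main := hasDerivAt_integral_of_dominated_loc_of_deriv_le (μ := volume)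
      (F := fun (x : ℝ) (ξ : ℝ) => fhat f ξ * Complex.exp (Complex.I * x * ξ))
      (F' := F') (x₀ := l₁) (bound := fun ξ => σ * ‖fhat f ξ‖) (s := Metric.ball l₁ 1) (Metric.ball_mem_nhds _ one_pos)
      (Filter.Eventually.of_forall fun x => (int_mul_exp hfhat x).aestronglyMeasurable)
      (int_mul_exp hfhat l₁)
      (hfhat.aestronglyMeasurable.mul
        ((Complex.continuous_exp.comp (by continuity)).mul
          (continuous_const.mul Complex.continuous_ofReal)).aestronglyMeasurable)
      ?bdd ?bint ?diff
    case bdd =>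
      filter_upwards with ξ
      intro x hx
      have hn : ‖F' x ξ‖ = ‖fhat f ξ‖ * |ξ| := by
        rw [hF']
        simp only [norm_mul, exp_norm_one, Complex.norm_I, Complex.norm_real, Real.norm_eq_abs]
        ring
      rw [hn]
      by_cases hG : fhat f ξ = 0
      · simp [hG]
      · have hmem := hsupp ξ hG
        have : |ξ| ≤ σ := by
          rw [_root_.abs_of_nonneg hmem.1]
          exact hmem.2
        rw [mul_comm]
        exact mul_le_mul_of_nonneg_right this (norm_nonneg _)
    case bint => exact hfhat.norm.const_mul σ
    case diff =>
      filter_upwards with ξ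
      intro x hx
      have h0 : HasDerivAt (fun y : ℂ => Complex.I * y * (ξ:ℂ)) (Complex.I * (ξ:ℂ)) (x:ℂ) := by
        simpa using ((hasDerivAt_id (x:ℂ)).const_mul Complex.I).mul_const (ξ:ℂ)
      have h1 : HasDerivAt (fun y : ℂ => Complex.exp (Complex.I * y * ξ))
          (Complex.exp (Complex.I * x * ξ) * (Complex.I * ξ)) (x:ℂ) := h0.cexp
      exact (h1.comp_ofReal).const_mul (fhat f ξ)
    -- identify f with the inverse Fourier integral
    have hfinv : f = fun x : ℝ => (2 * (π:ℂ))⁻¹ * ∫ ξ : ℝ, fhat f ξ * Complex.exp (Complex.I * x * ξ) := by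
      funext x
      rw [inversion hcont hf hfhat x]
      push_cast
      rw [inv_mul_cancel_left₀ hπc]
    have hD : HasDerivAt f ((2 * (π:ℂ))⁻¹ * ∫ ξ : ℝ, F' l₁ ξ) l₁ := by
      rw [hfinv]
      exact (main.2).const_mul _
    rw [hD.deriv]
    have hpt : ∀ ξ : ℝ, F' l₁ ξ
        = Complex.I * (fhat f ξ * Complex.exp (Complex.I * l₁ * ξ) * (ξ:ℂ)) := by
      intro ξ
      rw [hF']
      ring
    rw [integral_congr_ae (Filter.Eventually.of_forall hpt), integral_const_mul]
    field_simp
  · simp only [dd1, if_neg hl]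
    have hll : ((l₁:ℂ) - (l₂:ℂ)) ≠ 0 := sub_ne_zero.2 (by exact_mod_cast hl)
    set c : ℂ := Complex.I * ((l₁:ℂ) - (l₂:ℂ)) with hc
    have hcne : c ≠ 0 := mul_ne_zero Complex.I_ne_zero hll
    have hK : ∀ ξ : ℝ, fhat f ξ * Complex.exp (Complex.I * l₂ * ξ) *
        (∫ u in Set.Icc (0:ℝ) ξ, Complex.exp (c * u))
        = c⁻¹ * (fhat f ξ * Complex.exp (Complex.I * l₁ * ξ))
          - c⁻¹ * (fhat f ξ * Complex.exp (Complex.I * l₂ * ξ)) := by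
      intro ξ
      by_cases hG : fhat f ξ = 0
      · simp [hG]
      · have hξ0 : (0:ℝ) ≤ ξ := (hsupp ξ hG).1
        have hKv : (∫ u in Set.Icc (0:ℝ) ξ, Complex.exp (c * u))
            = (Complex.exp (c * ξ) - 1) / c := by
          rw [MeasureTheory.integral_Icc_eq_integral_Ioc,
            ← intervalIntegral.integral_of_le hξ0, integral_exp_mul_complex hcne]
          norm_num
        have hee : Complex.exp (Complex.I * l₂ * ξ) * Complex.exp (c * ξ)
            = Complex.exp (Complex.I * l₁ * ξ) := by
          rw [← Complex.exp_add]
          congr 1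
          rw [hc]
          push_cast
          ring
        rw [hKv, div_eq_mul_inv, ← hee]
        ring
    rw [integral_congr_ae (Filter.Eventually.of_forall hK)]
    rw [integral_sub ((int_mul_exp hfhat l₁).const_mul _) ((int_mul_exp hfhat l₂).const_mul _),
      integral_const_mul, integral_const_mul, inversion hcont hf hfhat l₁,
      inversion hcont hf hfhat l₂]
    rw [hc]
    push_cast
    field_simp
end

section
/- Let k ∈ ℕ and let f : ℝ → ℂ be the Fourier transform of a complex Borel measure μ on ℝ, i.e., f(λ) = ∫_ℝ e^{iλξ} μ(dξ), where ∫_ℝ |ξ|^k |μ|(dξ) < ∞. Then for each 1 ≤ j ≤ k, the j-th divided difference of f admits the decomposition f^{[j]}(λ₁, …, λ_{j+1}) = ∫_{Δ_j} ∫_ℝ e^{i t₁ λ₁ ξ} ⋯ e^{i t_{j+1} λ_{j+1} ξ} (iξ)^j μ(dξ) ρ_j(dt), and consequently this gives an integral projective decomposition of f^{[j]} into bounded functions of each variable separately, with ∫_{Δ_j} ∫_ℝ |ξ|^j |μ|(dξ) ρ_j(dt) = (1/j!) ∫_ℝ |ξ|^j |μ|(dξ), so the integral projective tensor norm of f^{[j]}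 is at most (1/j!) ∫_ℝ |ξ|^j |μ|(dξ). -/
open MeasureTheory ENNReal


lemma aux_vol : ∀ (n : ℕ) (r : ℝ), 0 ≤ r →
    (volume {s : Fin n → ℝ | (∀ i, 0 ≤ s i) ∧ ∑ i, s i ≤ r} : ℝ≥0∞) =
      ENNReal.ofReal (r ^ n / n.factorial) := by
  intro n
  induction n with
  | zero =>
    intro r hr
    have h : {s : Fin 0 → ℝ | (∀ i, 0 ≤ s i) ∧ ∑ i, s i ≤ r} = Set.univ := by
      ext s; simp [hr]
    rw [h]
    simp [volume_pi, Measure.pi_univ]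
  | succ n ih =>
    intro r hr
    have e := MeasureTheory.volume_preserving_piFinSuccAbove (fun _ : Fin (n+1) => ℝ) 0
    have hSmeas : MeasurableSet {s : Fin (n+1) → ℝ | (∀ i, 0 ≤ s i) ∧ ∑ i, s i ≤ r} := by
      have h1 : {s : Fin (n+1) → ℝ | ∀ i, 0 ≤ s i} = ⋂ i, {s | 0 ≤ s i} := by
        ext s; simp [Set.mem_iInter]
      have h2 : MeasurableSet {s : Fin (n+1) → ℝ | ∀ i, 0 ≤ s i} := by
        rw [h1]
        exact MeasurableSet.iInter fun i => measurableSet_le measurable_const (measurable_pi_apply i)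
      exact h2.inter (measurableSet_le (Finset.measurable_sum _ fun i _ => measurable_pi_apply i)
          measurable_const)
    have key := (e.symm _).measure_preimage hSmeas.nullMeasurableSet
    have hpre : (MeasurableEquiv.piFinSuccAbove (fun _ : Fin (n+1) => ℝ) 0).symm ⁻¹'
        {s : Fin (n+1) → ℝ | (∀ i, 0 ≤ s i) ∧ ∑ i, s i ≤ r} =
        {p : ℝ × (Fin n → ℝ) | (0 ≤ p.1 ∧ ∀ i, 0 ≤ p.2 i) ∧ p.1 + ∑ i, p.2 i ≤ r} := by
      ext p
      simp only [Set.mem_preimage, Set.mem_setOf_eq, MeasurableEquiv.piFinSuccAbove_symm_apply,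
        Fin.insertNthEquiv_zero, Fin.consEquiv_apply, Fin.sum_cons, Fin.forall_fin_succ,
        Fin.cons_zero, Fin.cons_succ]
    rw [hpre] at key
    rw [← key]
    have hT : MeasurableSet {p : ℝ × (Fin n → ℝ) | (0 ≤ p.1 ∧ ∀ i, 0 ≤ p.2 i) ∧ p.1 + ∑ i, p.2 i ≤ r} := by
      have h1 : {p : ℝ × (Fin n → ℝ) | ∀ i, 0 ≤ p.2 i} = ⋂ i, {p | 0 ≤ p.2 i} := by
        ext p; simp [Set.mem_iInter]
      have h2 : MeasurableSet {p : ℝ × (Fin n → ℝ) | ∀ i, 0 ≤ p.2 i} := by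
        rw [h1]
        exact MeasurableSet.iInter fun i =>
          measurableSet_le measurable_const (measurable_snd.eval)
      exact (((measurableSet_le measurable_const measurable_fst).inter h2).inter
        (measurableSet_le (measurable_fst.add
          (Finset.measurable_sum _ fun i _ => (measurable_snd.eval : Measurable fun p : ℝ × (Fin n → ℝ) => p.2 i)))
          measurable_const))
    have : (volume : Measure (ℝ × (Fin n → ℝ))) = (volume : Measure ℝ).prod volume := rfl
    rw [this, Measure.prod_apply hT]
    have hslice : ∀ x : ℝ,
        (volume : Measure (Fin n → ℝ)) (Prod.mk x ⁻¹' {p : ℝ × (Fin n → ℝ) | (0 ≤ p.1 ∧ ∀ i, 0 ≤ p.2 i) ∧ p.1 + ∑ i, p.2 i ≤ r}) =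
        Set.indicator (Set.Icc 0 r) (fun x => ENNReal.ofReal ((r - x) ^ n / n.factorial)) x := by
      intro x
      by_cases hx : x ∈ Set.Icc 0 r
      · rw [Set.indicator_of_mem hx]
        have : (Prod.mk x ⁻¹' {p : ℝ × (Fin n → ℝ) | (0 ≤ p.1 ∧ ∀ i, 0 ≤ p.2 i) ∧ p.1 + ∑ i, p.2 i ≤ r})
            = {s : Fin n → ℝ | (∀ i, 0 ≤ s i) ∧ ∑ i, s i ≤ r - x} := by
          ext s
          simp only [Set.mem_preimage, Set.mem_setOf_eq]
          constructor
          · rintro ⟨⟨-, h2⟩, h3⟩; exact ⟨h2, by linarith⟩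
          · rintro ⟨h2, h3⟩; exact ⟨⟨hx.1, h2⟩, by linarith⟩
        rw [this, ih (r - x) (by linarith [hx.2])]
      · rw [Set.indicator_of_notMem hx]
        have : (Prod.mk x ⁻¹' {p : ℝ × (Fin n → ℝ) | (0 ≤ p.1 ∧ ∀ i, 0 ≤ p.2 i) ∧ p.1 + ∑ i, p.2 i ≤ r})
            = (∅ : Set (Fin n → ℝ)) := by
          ext s
          simp only [Set.mem_preimage, Set.mem_setOf_eq, Set.mem_empty_iff_false, iff_false]
          rintro ⟨⟨h1, h2⟩, h3⟩
          have hsum : 0 ≤ ∑ i, s i := Finset.sum_nonneg fun i _ => h2 i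
          simp only [Set.mem_Icc, not_and_or, not_le] at hx
          rcases hx with hx | hx
          · linarith
          · linarith
        rw [this]; simp
    rw [lintegral_congr hslice, lintegral_indicator measurableSet_Icc]
    have hint : IntegrableOn (fun x => (r - x) ^ n / n.factorial) (Set.Icc 0 r) volume :=
      (Continuous.integrableOn_Icc (by continuity))
    have hnn : 0 ≤ᵐ[volume.restrict (Set.Icc 0 r)] fun x => (r - x) ^ n / n.factorial := by
      refine (ae_restrict_iff' measurableSet_Icc).2 (ae_of_all _ fun x hx => ?_)
      have : (0:ℝ) ≤ (r - x) ^ n := pow_nonneg (by linarith [hx.2]) n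
      positivity
    rw [← MeasureTheory.ofReal_integral_eq_lintegral_ofReal hint hnn]
    congr 1
    rw [MeasureTheory.integral_Icc_eq_integral_Ioc, ← intervalIntegral.integral_of_le hr]
    rw [intervalIntegral.integral_div]
    have : (∫ x in (0:ℝ)..r, (r - x) ^ n) = ∫ x in (0:ℝ)..r, x ^ n := by
      have := intervalIntegral.integral_comp_sub_left (a := (0:ℝ)) (b := r) (fun x => x ^ n) r
      simpa using this
    rw [this, integral_pow]
    rw [Nat.factorial_succ]
    push_cast
    field_simp
    simp


lemma aux_im_norm (z : ℂ) (hz : z.re = 0) : ‖Complex.exp z‖ = 1 := by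
  rw [Complex.norm_exp, hz, Real.exp_zero]

lemma aux_re (a b c : ℝ) : (Complex.I * a * b * c).re = 0 := by
  simp [Complex.mul_re, Complex.mul_im]

lemma aux_norm_term (x ξ : ℝ) (n : ℕ) (w : ℝ → ℂ) (hw : ∀ ξ, ‖w ξ‖ = 1) :
    ‖Complex.exp (Complex.I * x * ξ) * (Complex.I * ξ) ^ n * w ξ‖ = ‖ξ‖ ^ n := by
  rw [norm_mul, norm_mul, hw, aux_im_norm _ (by simpa using aux_re x ξ 1), norm_pow, norm_mul,
    Complex.norm_I, one_mul, mul_one, one_mul, Complex.norm_real,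
    Real.norm_eq_abs]

lemma aux_pow_int (m : Measure ℝ) [IsFiniteMeasure m] {n : ℕ}
    (h : ∫⁻ ξ : ℝ, (‖ξ‖₊ : ℝ≥0∞) ^ n ∂m < ∞) :
    Integrable (fun ξ : ℝ => ‖ξ‖ ^ n) m := by
  refine ⟨(measurable_norm.pow_const n).aestronglyMeasurable, ?_⟩
  rw [hasFiniteIntegral_iff_norm]
  simp only [Real.norm_eq_abs, abs_pow, abs_abs]
  have heq : ∀ a : ℝ, ENNReal.ofReal (|a| ^ n) = (‖a‖₊ : ℝ≥0∞) ^ n := by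
    intro a
    rw [ENNReal.ofReal_pow (abs_nonneg _), ← Real.enorm_eq_ofReal_abs, enorm_eq_nnnorm]
  simpa [heq] using h

lemma aux_mom_le (m : Measure ℝ) [IsFiniteMeasure m] {k n : ℕ} (hnk : n ≤ k)
    (hmom : ∫⁻ ξ : ℝ, (‖ξ‖₊ : ℝ≥0∞) ^ k ∂m < ∞) :
    ∫⁻ ξ : ℝ, (‖ξ‖₊ : ℝ≥0∞) ^ n ∂m < ∞ := by
  have hle : ∀ ξ : ℝ, (‖ξ‖₊ : ℝ≥0∞) ^ n ≤ 1 + (‖ξ‖₊ : ℝ≥0∞) ^ k := by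
    intro ξ
    rcases le_total ((‖ξ‖₊ : ℝ≥0∞)) 1 with h | h
    · exact le_trans (pow_le_one' h n) le_self_add
    · exact le_trans (pow_le_pow_right₀ h hnk) le_add_self
  calc ∫⁻ ξ : ℝ, (‖ξ‖₊ : ℝ≥0∞) ^ n ∂m ≤ ∫⁻ ξ : ℝ, (1 + (‖ξ‖₊ : ℝ≥0∞) ^ k) ∂m :=
        lintegral_mono hle
    _ = m Set.univ + ∫⁻ ξ : ℝ, (‖ξ‖₊ : ℝ≥0∞) ^ k ∂m := by
        rw [lintegral_add_left measurable_const, lintegral_const, one_mul]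
    _ < ∞ := ENNReal.add_lt_top.2 ⟨measure_lt_top m _, hmom⟩

lemma aux_meas_term (w : ℝ → ℂ) (hwmeas : Measurable w) (n : ℕ) (x : ℝ) :
    Measurable (fun ξ : ℝ => Complex.exp (Complex.I * x * ξ) * (Complex.I * ξ) ^ n * w ξ) := by
  apply Measurable.mul _ hwmeas
  apply Measurable.mul
  · exact Complex.measurable_exp.comp ((measurable_const.mul Complex.measurable_ofReal))
  · exact (measurable_const.mul Complex.measurable_ofReal).pow_const n

lemma aux_hasDerivAt_exp (x ξ : ℝ) :
    HasDerivAt (fun x : ℝ => Complex.exp (Complex.I * x * ξ))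
      (Complex.exp (Complex.I * x * ξ) * (Complex.I * ξ)) x := by
  have h1 : HasDerivAt (fun x : ℝ => Complex.I * (x : ℂ) * (ξ : ℂ)) (Complex.I * ξ) x := by
    have := ((Complex.ofRealCLM.hasDerivAt (x := x)).const_mul Complex.I).mul_const (ξ : ℂ)
    simpa using this
  simpa using h1.cexp

lemma aux_deriv_int (m : Measure ℝ) [IsFiniteMeasure m] (w : ℝ → ℂ) (hw : ∀ ξ, ‖w ξ‖ = 1)
    (hwmeas : Measurable w) (n : ℕ)
    (hn : Integrable (fun ξ : ℝ => ‖ξ‖ ^ n) m)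
    (hn1 : Integrable (fun ξ : ℝ => ‖ξ‖ ^ (n+1)) m) (x : ℝ) :
    HasDerivAt (fun x : ℝ => ∫ ξ : ℝ, Complex.exp (Complex.I * x * ξ) * (Complex.I * ξ) ^ n * w ξ ∂m)
      (∫ ξ : ℝ, Complex.exp (Complex.I * x * ξ) * (Complex.I * ξ) ^ (n+1) * w ξ ∂m) x := by
  have := hasDerivAt_integral_of_dominated_loc_of_deriv_le (μ := m)
    (F := fun (x : ℝ) (ξ : ℝ) => Complex.exp (Complex.I * x * ξ) * (Complex.I * ξ) ^ n * w ξ)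
    (F' := fun (x : ℝ) (ξ : ℝ) => Complex.exp (Complex.I * x * ξ) * (Complex.I * ξ) ^ (n+1) * w ξ)
    (x₀ := x) (bound := fun ξ => ‖ξ‖ ^ (n+1)) (s := Metric.ball x 1) (Metric.ball_mem_nhds x one_pos)
    (Filter.Eventually.of_forall fun y => (aux_meas_term w hwmeas n y).aestronglyMeasurable)
    ?_ ((aux_meas_term w hwmeas (n+1) x).aestronglyMeasurable) ?_ hn1 ?_
  · exact this.2
  · refine hn.mono' ((aux_meas_term w hwmeas n x).aestronglyMeasurable) ?_
    exact Filter.Eventually.of_forall fun ξ => le_of_eq (aux_norm_term x ξ n w hw)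
  · exact Filter.Eventually.of_forall fun ξ y _ => le_of_eq (aux_norm_term y ξ (n+1) w hw)
  · refine Filter.Eventually.of_forall fun ξ y _ => ?_
    have h := (aux_hasDerivAt_exp y ξ).mul_const ((Complex.I * ξ) ^ n * w ξ)
    have heq : ∀ z : ℝ, Complex.exp (Complex.I * z * ξ) * ((Complex.I * ξ) ^ n * w ξ) =
        Complex.exp (Complex.I * z * ξ) * (Complex.I * ξ) ^ n * w ξ := fun z => by ring
    simp only [heq] at h
    exact h.congr_deriv (by ring)

lemma aux_iter (m : Measure ℝ) [IsFiniteMeasure m] (w : ℝ → ℂ) (hw : ∀ ξ, ‖w ξ‖ = 1)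
    (hwmeas : Measurable w) (f : ℝ → ℂ)
    (hf : ∀ t : ℝ, f t = ∫ ξ : ℝ, Complex.exp (Complex.I * t * ξ) * w ξ ∂m)
    (k : ℕ) (hmom : ∫⁻ ξ : ℝ, (‖ξ‖₊ : ℝ≥0∞) ^ k ∂m < ∞) :
    ∀ n, n ≤ k → ∀ x : ℝ,
      iteratedDeriv n f x = ∫ ξ : ℝ, Complex.exp (Complex.I * x * ξ) * (Complex.I * ξ) ^ n * w ξ ∂m := by
  intro n
  induction n with
  | zero =>
    intro _ x
    simp only [iteratedDeriv_zero, hf x, pow_zero, mul_one]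
  | succ n ih =>
    intro hnk x
    rw [iteratedDeriv_succ]
    have hfn : iteratedDeriv n f = fun y : ℝ =>
        ∫ ξ : ℝ, Complex.exp (Complex.I * y * ξ) * (Complex.I * ξ) ^ n * w ξ ∂m :=
      funext (ih (le_of_lt hnk))
    rw [hfn]
    exact (aux_deriv_int m w hw hwmeas n
      (aux_pow_int m (aux_mom_le m (le_of_lt hnk) hmom))
      (aux_pow_int m (aux_mom_le m hnk hmom)) x).deriv

/-- The standard `k`-simplex `Σ_k = {s ∈ ℝ^k : s_i ≥ 0, ∑ s_i ≤ 1}`. -/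
def simplexSet (k : ℕ) : Set (Fin k → ℝ) :=
  {s | (∀ i, 0 ≤ s i) ∧ ∑ i, s i ≤ 1}

/-- The barycentric coordinates `(s₁, …, s_k, 1 − s₁ − ⋯ − s_k) ∈ Δ_k`. -/
noncomputable def simplexCoord (k : ℕ) (s : Fin k → ℝ) : Fin (k + 1) → ℝ :=
  fun i => if h : (i : ℕ) < k then s ⟨i, h⟩ else 1 - ∑ i, s i

/-- The `k`-th divided difference of `f`, extended continuously to all of `ℝ^{k+1}` via the
simplex integral formula `f^{[k]}(λ) = ∫_{Δ_k} f^{(k)}(t ⬝ λ) ρ_k(dt)`. -/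
noncomputable def divDiffE (f : ℝ → ℂ) (k : ℕ) (l : Fin (k + 1) → ℝ) : ℂ :=
  ∫ s in simplexSet k, iteratedDeriv k f (∑ i, simplexCoord k s i * l i)

/-- The integral projective tensor norm of `φ : ℝ^{k+1} → ℂ`: the infimum, over integral
projective decompositions `φ(λ) = ∫_Σ ∏ᵢ ψᵢ(λᵢ, σ) ρ(dσ)` into bounded measurable functions
of each variable separately, of `∫_Σ ∏ᵢ ‖ψᵢ(·, σ)‖_∞ ρ(dσ)`. -/
noncomputable def iptpNormN (k : ℕ) (φ : (Fin (k + 1) → ℝ) → ℂ) : ℝ≥0∞ :=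
  sInf {C : ℝ≥0∞ | ∃ (Ω : Type) (_ : MeasurableSpace Ω) (ρ : Measure Ω)
    (ψ : Fin (k + 1) → ℝ → Ω → ℂ),
      SigmaFinite ρ ∧
      (∀ i, Measurable fun p : ℝ × Ω => ψ i p.1 p.2) ∧
      (∀ i ω, ∃ Ci : ℝ, ∀ x, ‖ψ i x ω‖ ≤ Ci) ∧
      (∀ l : Fin (k + 1) → ℝ, φ l = ∫ ω, (∏ i, ψ i (l i) ω) ∂ρ) ∧
      C = upperIntegral ρ (fun ω => ∏ i, ⨆ x : ℝ, (‖ψ i x ω‖₊ : ℝ≥0∞))}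

set_option maxHeartbeats 1000000 in
/-- If `f(λ) = ∫ e^{iλξ} μ(dξ)` for a complex Borel measure `μ = w·m` (with `|w| = 1` and `m`
a finite positive measure) having finite `k`-th moment, then for each `1 ≤ j ≤ k` the `j`-th
divided difference decomposes as
`f^{[j]}(λ) = ∫_{Δ_j} ∫_ℝ e^{it₁λ₁ξ} ⋯ e^{it_{j+1}λ_{j+1}ξ} (iξ)^j μ(dξ) ρ_j(dt)`, an
integral projective decomposition witnessing
`‖f^{[j]}‖_{⊗̂ᵢ} ≤ (1/j!) ∫ |ξ|^j |μ|(dξ)`. -/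
theorem stmt19 (k : ℕ) (m : Measure ℝ) [IsFiniteMeasure m]
    (w : ℝ → ℂ) (hw : ∀ ξ, ‖w ξ‖ = 1) (hwmeas : Measurable w)
    (f : ℝ → ℂ)
    (hf : ∀ t : ℝ, f t = ∫ ξ : ℝ, Complex.exp (Complex.I * t * ξ) * w ξ ∂m)
    (hmom : ∫⁻ ξ : ℝ, (‖ξ‖₊ : ℝ≥0∞) ^ k ∂m < ∞)
    (j : ℕ) (hj1 : 1 ≤ j) (hjk : j ≤ k) :
    (∀ l : Fin (j + 1) → ℝ,
      divDiffE f j l =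
        ∫ s in simplexSet j,
          (∫ ξ : ℝ,
            (∏ i, Complex.exp (Complex.I * ((simplexCoord j s i : ℝ) : ℂ) * (l i : ℝ) * ξ)) *
              (Complex.I * ξ) ^ j * w ξ ∂m)) ∧
    iptpNormN j (divDiffE f j) ≤
      ENNReal.ofReal (1 / (Nat.factorial j : ℝ)) * ∫⁻ ξ : ℝ, (‖ξ‖₊ : ℝ≥0∞) ^ j ∂m := by
  classical
  have hMj : ∫⁻ ξ : ℝ, (‖ξ‖₊ : ℝ≥0∞) ^ j ∂m < ∞ := aux_mom_le m hjk hmom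
  have hiter := aux_iter m w hw hwmeas f hf k hmom j hjk
  -- Part 1
  have hpart1 : ∀ l : Fin (j + 1) → ℝ,
      divDiffE f j l =
        ∫ s in simplexSet j,
          (∫ ξ : ℝ,
            (∏ i, Complex.exp (Complex.I * ((simplexCoord j s i : ℝ) : ℂ) * (l i : ℝ) * ξ)) *
              (Complex.I * ξ) ^ j * w ξ ∂m) := by
    intro l
    unfold divDiffE
    refine integral_congr_ae (Filter.Eventually.of_forall fun s => ?_)
    dsimp only
    rw [hiter (∑ i, simplexCoord j s i * l i)]
    refine integral_congr_ae (Filter.Eventually.of_forall fun ξ => ?_)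
    dsimp only
    congr 2
    have harg : (Complex.I * ((∑ i, simplexCoord j s i * l i : ℝ) : ℂ) * (ξ : ℂ)) =
        ∑ i, Complex.I * ((simplexCoord j s i : ℝ) : ℂ) * ((l i : ℝ) : ℂ) * (ξ : ℂ) := by
      push_cast
      rw [Finset.mul_sum, Finset.sum_mul]
      exact Finset.sum_congr rfl fun i _ => by ring
    rw [harg, Complex.exp_sum]
  refine ⟨hpart1, ?_⟩
  -- Part 2
  set Ω := (Fin j → ℝ) × ℝ with hΩ
  set ρ : Measure Ω := (volume.restrict (simplexSet j)).prod m with hρ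
  set ψ : Fin (j + 1) → ℝ → Ω → ℂ := fun i x ω =>
    Complex.exp (Complex.I * ((simplexCoord j ω.1 i : ℝ) : ℂ) * (x : ℝ) * (ω.2 : ℝ)) *
      (if i = Fin.last j then (Complex.I * ω.2) ^ j * w ω.2 else 1) with hψ
  have hvolΔ : (volume (simplexSet j) : ℝ≥0∞) = ENNReal.ofReal (1 / j.factorial) := by
    have := aux_vol j 1 zero_le_one
    simpa [simplexSet] using this
  haveI : IsFiniteMeasure (volume.restrict (simplexSet j)) := by
    constructor
    rw [Measure.restrict_apply_univ, hvolΔ]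
    exact ofReal_lt_top
  haveI : SigmaFinite ρ := by rw [hρ]; infer_instance
  -- measurability of ψ
  have hcoord : ∀ i : Fin (j + 1), Measurable fun s : Fin j → ℝ => simplexCoord j s i := by
    intro i
    unfold simplexCoord
    by_cases h : (i : ℕ) < j
    · simpa [h] using measurable_pi_apply (⟨(i : ℕ), h⟩ : Fin j)
    · simp only [h, dif_neg, not_false_iff]
      exact measurable_const.sub (Finset.measurable_sum _ fun i _ => measurable_pi_apply i)
  have hψmeas : ∀ i, Measurable fun p : ℝ × Ω => ψ i p.1 p.2 := by
    intro i
    rw [hψ]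
    apply Measurable.mul
    · apply Complex.measurable_exp.comp
      exact (((Complex.measurable_ofReal.comp
          ((hcoord i).comp (measurable_fst.comp measurable_snd))).const_mul Complex.I).mul
        (Complex.measurable_ofReal.comp measurable_fst)).mul
        (Complex.measurable_ofReal.comp (measurable_snd.comp measurable_snd))
    · by_cases h : i = Fin.last j
      · simp only [h, if_true]
        exact (((Complex.measurable_ofReal.comp
            (measurable_snd.comp measurable_snd)).const_mul Complex.I).pow_const j).mul
          (hwmeas.comp (measurable_snd.comp measurable_snd))
      · simp only [h, if_false]
        exact measurable_const
  -- norm computation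
  have hnormR : ∀ (i : Fin (j + 1)) (x : ℝ) (ω : Ω),
      ‖ψ i x ω‖ = if i = Fin.last j then ‖ω.2‖ ^ j else 1 := by
    intro i x ω
    rw [hψ]
    simp only
    rw [norm_mul, aux_im_norm _ (aux_re _ _ _), one_mul]
    by_cases h : i = Fin.last j
    · simp only [h, if_true]
      rw [norm_mul, hw, mul_one, norm_pow]
      congr 1
      simp [map_mul, Complex.norm_I, Complex.norm_real, Real.norm_eq_abs]
    · simp [h]
  have hnn : ∀ (i : Fin (j + 1)) (x : ℝ) (ω : Ω),
      (‖ψ i x ω‖₊ : ℝ≥0∞) = if i = Fin.last j then (‖ω.2‖₊ : ℝ≥0∞) ^ j else 1 := by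
    intro i x ω
    rw [← enorm_eq_nnnorm, ← ofReal_norm, hnormR i x ω]
    by_cases h : i = Fin.last j
    · simp only [h, if_true]
      rw [ENNReal.ofReal_pow (norm_nonneg _), ofReal_norm, enorm_eq_nnnorm]
    · simp [h]
  have hψbdd : ∀ (i : Fin (j + 1)) (ω : Ω), ∃ Ci : ℝ, ∀ x : ℝ, ‖ψ i x ω‖ ≤ Ci := by
    intro i ω
    exact ⟨if i = Fin.last j then ‖ω.2‖ ^ j else 1, fun x => le_of_eq (hnormR i x ω)⟩
  -- product of ψ
  have hprod : ∀ (l : Fin (j + 1) → ℝ) (ω : Ω),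
      (∏ i, ψ i (l i) ω) =
        (∏ i, Complex.exp (Complex.I * ((simplexCoord j ω.1 i : ℝ) : ℂ) * ((l i : ℝ) : ℂ) * (ω.2 : ℂ))) *
          ((Complex.I * ω.2) ^ j * w ω.2) := by
    intro l ω
    rw [hψ]
    simp only
    rw [Finset.prod_mul_distrib]
    congr 1
    rw [Finset.prod_ite_eq' Finset.univ (Fin.last j)
      (fun _ => (Complex.I * (ω.2 : ℂ)) ^ j * w ω.2)]
    simp
  have hprodnn : ∀ (l : Fin (j + 1) → ℝ) (ω : Ω),
      (‖∏ i, ψ i (l i) ω‖₊ : ℝ≥0∞) = (‖ω.2‖₊ : ℝ≥0∞) ^ j := by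
    intro l ω
    rw [← enorm_eq_nnnorm, ← ofReal_norm, norm_prod]
    have : ∀ i ∈ Finset.univ, ‖ψ i (l i) ω‖ = if i = Fin.last j then ‖ω.2‖ ^ j else 1 :=
      fun i _ => hnormR i (l i) ω
    rw [Finset.prod_congr rfl this, Finset.prod_ite_eq' Finset.univ (Fin.last j)
      (fun _ => ‖ω.2‖ ^ j)]
    simp only [Finset.mem_univ, if_true]
    rw [ENNReal.ofReal_pow (norm_nonneg _), ofReal_norm, enorm_eq_nnnorm]
  -- key lintegral
  have hmeas2 : Measurable fun ω : Ω => (‖ω.2‖₊ : ℝ≥0∞) ^ j :=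
    (measurable_snd.nnnorm.coe_nnreal_ennreal).pow_const j
  have hlint : ∫⁻ ω : Ω, (‖ω.2‖₊ : ℝ≥0∞) ^ j ∂ρ =
      ENNReal.ofReal (1 / j.factorial) * ∫⁻ ξ : ℝ, (‖ξ‖₊ : ℝ≥0∞) ^ j ∂m := by
    rw [hρ, MeasureTheory.lintegral_prod _ hmeas2.aemeasurable]
    simp only
    rw [lintegral_const, Measure.restrict_apply_univ, hvolΔ, mul_comm]
  -- integrability of the product
  have hint : ∀ l : Fin (j + 1) → ℝ, Integrable (fun ω : Ω => ∏ i, ψ i (l i) ω) ρ := by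
    intro l
    constructor
    · exact (Finset.measurable_prod Finset.univ fun i _ =>
        (hψmeas i).comp ((measurable_const (a := l i)).prodMk measurable_id)).aestronglyMeasurable
    · rw [hasFiniteIntegral_def]
      calc ∫⁻ ω : Ω, (‖∏ i, ψ i (l i) ω‖₊ : ℝ≥0∞) ∂ρ
          = ∫⁻ ω : Ω, (‖ω.2‖₊ : ℝ≥0∞) ^ j ∂ρ := lintegral_congr fun ω => hprodnn l ω
        _ = ENNReal.ofReal (1 / j.factorial) * ∫⁻ ξ : ℝ, (‖ξ‖₊ : ℝ≥0∞) ^ j ∂m := hlint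
        _ < ∞ := ENNReal.mul_lt_top ofReal_lt_top hMj
  -- the decomposition property
  have hdecomp : ∀ l : Fin (j + 1) → ℝ,
      divDiffE f j l = ∫ ω : Ω, (∏ i, ψ i (l i) ω) ∂ρ := by
    intro l
    rw [hpart1 l, hρ, MeasureTheory.integral_prod _ (hint l)]
    refine integral_congr_ae (Filter.Eventually.of_forall fun s => ?_)
    refine integral_congr_ae (Filter.Eventually.of_forall fun ξ => ?_)
    dsimp only
    rw [hprod l (s, ξ)]
    ring
  -- the sup computation
  have hsup : (fun ω : Ω => ∏ i, ⨆ x : ℝ, (‖ψ i x ω‖₊ : ℝ≥0∞)) =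
      fun ω : Ω => (‖ω.2‖₊ : ℝ≥0∞) ^ j := by
    funext ω
    have : ∀ i ∈ Finset.univ, (⨆ x : ℝ, (‖ψ i x ω‖₊ : ℝ≥0∞)) =
        if i = Fin.last j then (‖ω.2‖₊ : ℝ≥0∞) ^ j else 1 := by
      intro i _
      rw [show (fun x : ℝ => (‖ψ i x ω‖₊ : ℝ≥0∞)) = fun _ : ℝ =>
        if i = Fin.last j then (‖ω.2‖₊ : ℝ≥0∞) ^ j else 1 from funext fun x => hnn i x ω]
      exact iSup_const
    rw [Finset.prod_congr rfl this, Finset.prod_ite_eq' Finset.univ (Fin.last j)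
      (fun _ => (‖ω.2‖₊ : ℝ≥0∞) ^ j)]
    simp
  -- conclusion
  have hC : iptpNormN j (divDiffE f j) ≤
      upperIntegral ρ (fun ω => ∏ i, ⨆ x : ℝ, (‖ψ i x ω‖₊ : ℝ≥0∞)) :=
    sInf_le ⟨Ω, inferInstance, ρ, ψ, inferInstance, hψmeas, hψbdd, hdecomp, rfl⟩
  refine le_trans hC ?_
  unfold upperIntegral
  rw [hsup]
  refine le_trans (iInf_le_of_le (fun ω : Ω => (‖ω.2‖₊ : ℝ≥0∞) ^ j)
    (iInf_le_of_le hmeas2 (iInf_le_of_le (Filter.Eventually.of_forall fun ω => le_rfl) le_rfl))) ?_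
  rw [hlint]
end
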